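/- arXiv:1201.5825 — 4 statements merged into one kernel-verified Lean document; each statement's English description precedes it below -/
import Mathlib

section
/- The number of non-crossing partitions of the set {1,...,kn} in which every block has exactly k elements equals binom(kn, n) / ((k-1)n + 1). -/
open scoped BigOperators Classical

/-- Partitions of `Fin n` (i.e. of `{1,…,n}`). -/
abbrev NCP (n : ℕ) := Finpartition (Finset.univ : Finset (Fin n))

/-- `x` and `y` lie in the same block of `P`. -/
def pRel {n : ℕ} (P : NCP n) (x y : Fin n) : Prop := ∃ t ∈ P.parts, x ∈ t ∧ y ∈ t

/-- `P` is a non-crossing partition. -/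
def IsNonCrossing {n : ℕ} (P : NCP n) : Prop :=
  ∀ a b c d : Fin n, a < b → b < c → c < d → pRel P a c → pRel P b d → pRel P a b

/-- Every block of `P` has exactly `k` elements (`k`-equal). -/
def IsKEqual (k : ℕ) {n : ℕ} (P : NCP n) : Prop := ∀ t ∈ P.parts, t.card = k

/-- Every block of `P` has size divisible by `k` (`k`-divisible). -/
def IsKDivisible (k : ℕ) {n : ℕ} (P : NCP n) : Prop := ∀ t ∈ P.parts, k ∣ t.card

/-- Every block of `P` contains only numbers of one residue class mod `k`. -/
def IsKPreserving (k : ℕ) {n : ℕ} (P : NCP n) : Prop :=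
  ∀ t ∈ P.parts, ∀ x ∈ t, ∀ y ∈ t, (x : ℕ) % k = (y : ℕ) % k

/-- The relation on `{1,…,2n}` obtained by putting `P` on the odd positions and `Q` on
the even positions (0-indexed: `P` on evens, `Q` on odds). -/
def jointRel {n : ℕ} (P Q : NCP n) (x y : Fin (2 * n)) : Prop :=
  ((x : ℕ) % 2 = 0 ∧ (y : ℕ) % 2 = 0 ∧
      pRel P ⟨(x : ℕ) / 2, by have := x.isLt; omega⟩ ⟨(y : ℕ) / 2, by have := y.isLt; omega⟩) ∨
  ((x : ℕ) % 2 = 1 ∧ (y : ℕ) % 2 = 1 ∧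
      pRel Q ⟨(x : ℕ) / 2, by have := x.isLt; omega⟩ ⟨(y : ℕ) / 2, by have := y.isLt; omega⟩)

/-- A symmetric-relation analogue of non-crossing. -/
def RelNonCrossing {m : ℕ} (R : Fin m → Fin m → Prop) : Prop :=
  ∀ a b c d : Fin m, a < b → b < c → c < d → R a c → R b d → R a b

/-- `Q` is the Kreweras complement of `P`: the union `P ∪ Q` (interleaved) is non-crossing and
`Q` is the largest such partition in the reverse refinement order. -/
def IsKr {n : ℕ} (P Q : NCP n) : Prop :=
  RelNonCrossing (jointRel P Q) ∧ ∀ Q' : NCP n, RelNonCrossing (jointRel P Q') → Q' ≤ Q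


/-- Dominance predicate for opener sets (auxiliary). -/
def Dom (k n : ℕ) (S : Finset (Fin (k*n))) : Prop :=
  S.card = n ∧ ∀ j : ℕ, j < k*n → j + 1 ≤ k * (S.filter (fun x => x.val ≤ j)).card


lemma NCP_arith (k n a : ℕ) (hk : 0 < k) (h : a * (k*n+1) = (k*n+1).choose n) :
    a = (k*n).choose n / ((k-1)*n+1) := by
  have hrm : n ≤ k*n := Nat.le_mul_of_pos_left n hk
  have hd : (k-1)*n + 1 = k*n + 1 - n := by
    have h1 : (k-1)*n = k*n - n := by rw [Nat.sub_mul, one_mul]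
    omega
  set m := k*n with hm
  have h3 : (m+1-n).factorial = (m+1-n) * (m-n).factorial := by
    rw [show m+1-n = (m-n)+1 by omega, Nat.factorial_succ]
  have h1 := Nat.choose_mul_factorial_mul_factorial (show n ≤ m+1 by omega)
  have h2 := Nat.choose_mul_factorial_mul_factorial hrm
  have hfac : ((m+1-n) * (m+1).choose n) * (n.factorial * (m-n).factorial)
      = ((m+1) * m.choose n) * (n.factorial * (m-n).factorial) := by
    calc ((m+1-n) * (m+1).choose n) * (n.factorial * (m-n).factorial)
        = (m+1).choose n * n.factorial * ((m+1-n) * (m-n).factorial) := by ring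
      _ = (m+1).choose n * n.factorial * (m+1-n).factorial := by rw [h3]
      _ = (m+1).factorial := h1
      _ = (m+1) * m.factorial := Nat.factorial_succ m
      _ = (m+1) * (m.choose n * n.factorial * (m-n).factorial) := by rw [h2]
      _ = ((m+1) * m.choose n) * (n.factorial * (m-n).factorial) := by ring
  have hid : (m+1-n) * (m+1).choose n = (m+1) * m.choose n :=
    Nat.eq_of_mul_eq_mul_right
      (Nat.mul_pos n.factorial_pos (m-n).factorial_pos) hfac
  have h4 : ((m+1-n) * a) * (m+1) = (m.choose n) * (m+1) := by
    calc ((m+1-n) * a) * (m+1) = (m+1-n) * (a * (m+1)) := by ring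
      _ = (m+1-n) * ((m+1).choose n) := by rw [h]
      _ = (m+1) * m.choose n := hid
      _ = m.choose n * (m+1) := by ring
  have h5 : (m+1-n) * a = m.choose n := Nat.eq_of_mul_eq_mul_right (by omega) h4
  rw [hd]
  exact (Nat.div_eq_of_eq_mul_left (by omega) (by rw [← h5, mul_comm])).symm

namespace NCPaux
open Finset

section Count
variable {k n : ℕ}

noncomputable def cnt (T : Finset (Fin (k*n+1))) (j : ℕ) : ℕ :=
  (T.filter (fun x => x.val < j)).card
noncomputable def Hh (T : Finset (Fin (k*n+1))) (j : ℕ) : ℤ := k * cnt T j - j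

noncomputable def ind (T : Finset (Fin (k*n+1))) (j : ℕ) : ℕ :=
  if hj : j < k*n+1 then (if (⟨j, hj⟩ : Fin (k*n+1)) ∈ T then 1 else 0) else 0

noncomputable def ccnt (T : Finset (Fin (k*n+1))) (c l : ℕ) : ℕ :=
  ((Finset.range l).filter
    (fun i => (⟨(i+c) % (k*n+1), Nat.mod_lt _ (Nat.succ_pos _)⟩ : Fin (k*n+1)) ∈ T)).card

lemma cnt_zero (T : Finset (Fin (k*n+1))) : cnt T 0 = 0 := by simp [cnt]

lemma cnt_top (T : Finset (Fin (k*n+1))) {j : ℕ} (hj : k*n+1 ≤ j) : cnt T j = T.card := by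
  unfold cnt; congr 1
  apply Finset.filter_true_of_mem
  intro x _
  exact lt_of_lt_of_le x.isLt hj

lemma cnt_succ (T : Finset (Fin (k*n+1))) (j : ℕ) :
    cnt T (j+1) = cnt T j + ind T j := by
  unfold cnt ind
  by_cases hj : j < k*n+1
  · rw [dif_pos hj]
    by_cases h : (⟨j, hj⟩ : Fin (k*n+1)) ∈ T
    · rw [if_pos h]
      have he : T.filter (fun x => x.val < j + 1) = insert ⟨j, hj⟩ (T.filter (fun x => x.val < j)) := by
        ext x
        simp only [Finset.mem_filter, Finset.mem_insert]
        constructor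
        · rintro ⟨hx, hlt⟩
          rcases Nat.lt_succ_iff_lt_or_eq.1 hlt with h' | h'
          · exact Or.inr ⟨hx, h'⟩
          · left; exact Fin.ext h'
        · rintro (rfl | ⟨hx, hlt⟩)
          · exact ⟨h, Nat.lt_succ_self _⟩
          · exact ⟨hx, Nat.lt_succ_of_lt hlt⟩
      rw [he, Finset.card_insert_of_notMem (by simp)]
    · rw [if_neg h]
      have he : T.filter (fun x => x.val < j + 1) = T.filter (fun x => x.val < j) := by
        ext x
        simp only [Finset.mem_filter]
        constructor
        · rintro ⟨hx, hlt⟩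
          refine ⟨hx, ?_⟩
          rcases Nat.lt_succ_iff_lt_or_eq.1 hlt with h' | h'
          · exact h'
          · exact absurd hx (by rwa [show x = (⟨j, hj⟩ : Fin (k*n+1)) from Fin.ext h'])
        · rintro ⟨hx, hlt⟩
          exact ⟨hx, Nat.lt_succ_of_lt hlt⟩
      rw [he]; omega
  · rw [dif_neg hj]
    have he : T.filter (fun x => x.val < j + 1) = T.filter (fun x => x.val < j) := by
      ext x
      simp only [Finset.mem_filter]
      have := x.isLt
      constructor
      · rintro ⟨hx, _⟩; exact ⟨hx, by omega⟩
      · rintro ⟨hx, _⟩; exact ⟨hx, by omega⟩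
    rw [he]; omega

lemma ccnt_zero (T : Finset (Fin (k*n+1))) (c : ℕ) : ccnt T c 0 = 0 := by simp [ccnt]

lemma ccnt_succ (T : Finset (Fin (k*n+1))) (c l : ℕ) :
    ccnt T c (l+1) = ccnt T c l + ind T ((l+c) % (k*n+1)) := by
  unfold ccnt ind
  rw [Finset.range_add_one, Finset.filter_insert, dif_pos (Nat.mod_lt _ (Nat.succ_pos _))]
  split
  · rw [Finset.card_insert_of_notMem (by simp)]
  · omega

lemma ccnt_eq (T : Finset (Fin (k*n+1))) (c : ℕ) (hc : c < k*n+1) :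
    ∀ l, l ≤ k*n+1 →
    ((ccnt T c l : ℤ) = if c + l ≤ k*n+1 then (cnt T (c+l) : ℤ) - cnt T c
      else ((cnt T (k*n+1) : ℤ) - cnt T c) + cnt T (c + l - (k*n+1))) := by
  intro l
  induction l with
  | zero => intro _; rw [if_pos (by omega)]; simp [ccnt_zero]
  | succ l IH =>
    intro hl1
    have hl : l ≤ k*n+1 := by omega
    have IH' := IH hl
    rw [ccnt_succ]
    by_cases hA : c + (l+1) ≤ k*n+1
    · have hA' : c + l ≤ k*n+1 := by omega
      rw [if_pos hA]
      rw [if_pos hA'] at IH'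
      have hmod : (l + c) % (k*n+1) = c + l := by
        rw [Nat.mod_eq_of_lt (by omega)]; omega
      rw [hmod, show c + (l+1) = (c+l) + 1 by omega, cnt_succ T (c+l)]
      push_cast; omega
    · rw [if_neg hA]
      by_cases hB : c + l = k*n+1
      · rw [if_pos (by omega)] at IH'
        have hmod : (l + c) % (k*n+1) = 0 := by
          rw [show l + c = k*n+1 by omega, Nat.mod_self]
        rw [hmod, show c + (l+1) - (k*n+1) = 1 by omega,
          show (1:ℕ) = 0 + 1 by rfl, cnt_succ T 0, cnt_zero]
        rw [hB] at IH'
        push_cast; omega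
      · have hB2 : k*n+1 < c + l := by omega
        rw [if_neg (by omega)] at IH'
        have hmod : (l + c) % (k*n+1) = c + l - (k*n+1) := by
          rw [Nat.mod_eq_sub_mod (by omega), Nat.mod_eq_of_lt (by omega)]; omega
        rw [hmod, show c + (l+1) - (k*n+1) = (c + l - (k*n+1)) + 1 by omega,
          cnt_succ T (c + l - (k*n+1))]
        push_cast; omega
/-- the rotation at `c` is dominant. -/
def GoodD (T : Finset (Fin (k*n+1))) (c : ℕ) : Prop :=
  ∀ l, 1 ≤ l → l ≤ k*n → l ≤ k * ccnt T c l

lemma Hh_zero (T : Finset (Fin (k*n+1))) : Hh T 0 = 0 := by simp [Hh, cnt_zero]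

lemma Hh_N (T : Finset (Fin (k*n+1))) (hT : T.card = n) : Hh T (k*n+1) = -1 := by
  simp [Hh, cnt_top T (le_refl _), hT]

lemma k_ccnt_nonwrap (T : Finset (Fin (k*n+1))) {c l : ℕ} (hc : c < k*n+1)
    (hl : l ≤ k*n+1) (hcl : c + l ≤ k*n+1) :
    (k * ccnt T c l : ℤ) = Hh T (c+l) - Hh T c + l := by
  have h := ccnt_eq T c hc l hl
  rw [if_pos hcl] at h
  unfold Hh
  have : ((k : ℤ)) * (ccnt T c l : ℤ) = k * ((cnt T (c+l) : ℤ) - cnt T c) := by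
    rw [← h]
  push_cast at this ⊢
  rw [this]; ring

lemma k_ccnt_wrap (T : Finset (Fin (k*n+1))) (hT : T.card = n) {c l : ℕ} (hc : c < k*n+1)
    (hl : l ≤ k*n+1) (hcl : k*n+1 < c + l) :
    (k * ccnt T c l : ℤ) = Hh T (c+l-(k*n+1)) - Hh T c + l - 1 := by
  have h := ccnt_eq T c hc l hl
  rw [if_neg (by omega)] at h
  unfold Hh
  have hN : cnt T (k*n+1) = n := by rw [cnt_top T (le_refl _), hT]
  have : ((k : ℤ)) * (ccnt T c l : ℤ)
      = k * (((cnt T (k*n+1) : ℤ) - cnt T c) + cnt T (c+l-(k*n+1))) := by rw [← h]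
  rw [hN] at this
  push_cast at this ⊢
  rw [this]
  have : ((c : ℤ) + l - (k*n+1)) = ((c + l - (k*n+1) : ℕ) : ℤ) := by push_cast; omega
  rw [← this]; ring

lemma good_unique (T : Finset (Fin (k*n+1))) (hT : T.card = n) {c c' : ℕ}
    (hc : c < k*n+1) (hc' : c' < k*n+1) (g : GoodD T c) (g' : GoodD T c') : c = c' := by
  -- wlog c < c'
  by_contra hne
  wlog hlt : c < c' generalizing c c'
  · exact this hc' hc g' g (Ne.symm hne) (by omega)
  -- from GoodD c with l = c' - c : Hh c' ≥ Hh c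
  have h1 : Hh T c ≤ Hh T c' := by
    have hg := g (c' - c) (by omega) (by omega)
    have hk := k_ccnt_nonwrap T hc (l := c' - c) (by omega) (by omega)
    rw [show c + (c' - c) = c' by omega] at hk
    have : ((c' - c : ℕ) : ℤ) ≤ (k * ccnt T c (c' - c) : ℤ) := by exact_mod_cast hg
    omega
  by_cases hc0 : c = 0
  · -- GoodD c' with l = N - c' : Hh N ≥ Hh c'
    subst hc0
    have h0 : Hh T 0 = 0 := Hh_zero T
    have hg := g' (k*n+1 - c') (by omega) (by omega)
    have hk := k_ccnt_nonwrap T hc' (l := k*n+1 - c') (by omega) (by omega)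
    rw [show c' + (k*n+1 - c') = k*n+1 by omega] at hk
    have hcast : ((k*n+1 - c' : ℕ) : ℤ) ≤ (k * ccnt T c' (k*n+1 - c') : ℤ) := by exact_mod_cast hg
    have hN := Hh_N T hT
    omega
  · -- GoodD c' with l = (k*n+1) + c - c' (wrap) : Hh c ≥ Hh c' + 1
    have hg := g' ((k*n+1) + c - c') (by omega) (by omega)
    have hk := k_ccnt_wrap T hT hc' (l := (k*n+1) + c - c') (by omega) (by omega)
    rw [show c' + ((k*n+1) + c - c') - (k*n+1) = c by omega] at hk
    have hcast : (((k*n+1) + c - c' : ℕ) : ℤ) ≤ (k * ccnt T c' ((k*n+1) + c - c') : ℤ) := by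
      exact_mod_cast hg
    omega

lemma good_exists (T : Finset (Fin (k*n+1))) (hT : T.card = n) :
    ∃ c, c < k*n+1 ∧ GoodD T c := by
  have hex : ∃ j, j ≤ k*n+1 ∧ ∀ i, i ≤ k*n+1 → Hh T j ≤ Hh T i := by
    obtain ⟨j, hj, hmin⟩ := Finset.exists_min_image (Finset.range (k*n+2)) (Hh T)
      ⟨0, by simp⟩
    refine ⟨j, ?_, fun i hi => hmin i (Finset.mem_range.2 (by omega))⟩
    have := Finset.mem_range.1 hj
    omega
  classical
  obtain ⟨c0, ⟨hc0N, hc0min⟩, hleast⟩ :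
      ∃ c0, (c0 ≤ k*n+1 ∧ ∀ i, i ≤ k*n+1 → Hh T c0 ≤ Hh T i) ∧
        ∀ mm, mm < c0 → ¬(mm ≤ k*n+1 ∧ ∀ i, i ≤ k*n+1 → Hh T mm ≤ Hh T i) :=
    ⟨Nat.find hex, Nat.find_spec hex, fun mm h => Nat.find_min hex h⟩
  have hfind : ∀ mm, mm < c0 → mm ≤ k*n+1 → Hh T c0 + 1 ≤ Hh T mm := by
    intro mm hmm hmmN
    have := hleast mm hmm
    push_neg at this
    obtain ⟨i, hi, hlt⟩ := this hmmN
    have := hc0min i hi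
    omega
  have h0 : Hh T 0 = 0 := Hh_zero T
  have hN := Hh_N T hT
  have hc0pos : 1 ≤ c0 := by
    by_contra h
    have h2 := hc0min (k*n+1) (le_refl _)
    have h3 : c0 = 0 := by omega
    rw [h3, h0, hN] at h2
    omega
  by_cases hcase : c0 ≤ k*n
  · refine ⟨c0, by omega, ?_⟩
    intro l hl1 hl2
    by_cases hw : c0 + l ≤ k*n+1
    · have hk := k_ccnt_nonwrap T (c := c0) (l := l) (by omega) (by omega) hw
      have h5 := hc0min (c0 + l) hw
      have : (l : ℤ) ≤ (k * ccnt T c0 l : ℤ) := by omega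
      exact_mod_cast this
    · have hk := k_ccnt_wrap T hT (c := c0) (l := l) (by omega) (by omega) (by omega)
      have hmm := hfind (c0 + l - (k*n+1)) (by omega) (by omega)
      have : (l : ℤ) ≤ (k * ccnt T c0 l : ℤ) := by omega
      exact_mod_cast this
  · -- c0 = k*n+1, take c = 0
    have hc0e : c0 = k*n+1 := by omega
    refine ⟨0, by omega, ?_⟩
    intro l hl1 hl2
    have hk := k_ccnt_nonwrap T (c := 0) (l := l) (by omega) (by omega) (by omega)
    have hmm := hfind l (by omega) (by omega)
    rw [hc0e, hN] at hmm
    rw [show (0:ℕ) + l = l by omega] at hk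
    have : (l : ℤ) ≤ (k * ccnt T 0 l : ℤ) := by omega
    exact_mod_cast this
/-- the shift map. -/
def shf (c : ℕ) (x : Fin (k*n)) : Fin (k*n+1) :=
  ⟨(x.val + c) % (k*n+1), Nat.mod_lt _ (Nat.succ_pos _)⟩

lemma shf_inj (c : ℕ) {x y : ℕ} (hx : x < k*n+1) (hy : y < k*n+1)
    (h : (x+c) % (k*n+1) = (y+c) % (k*n+1)) : x = y := by
  rcases le_total x y with hle | hle
  · have hmod : (x+c) ≡ (y+c) [MOD (k*n+1)] := h
    have hdvd := (Nat.modEq_iff_dvd' (by omega)).1 hmod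
    have := Nat.eq_zero_of_dvd_of_lt hdvd
    omega
  · have hmod : (y+c) ≡ (x+c) [MOD (k*n+1)] := h.symm
    have hdvd := (Nat.modEq_iff_dvd' (by omega)).1 hmod
    have := Nat.eq_zero_of_dvd_of_lt hdvd
    omega

lemma shf_injective (c : ℕ) : Function.Injective (shf (k := k) (n := n) c) := by
  intro x y h
  have := congrArg Fin.val h
  exact Fin.ext (shf_inj c (by omega) (by omega) this)

/-- the rotated set pulled back to `Fin (k*n)`. -/
noncomputable def rotSet (T : Finset (Fin (k*n+1))) (c : ℕ) : Finset (Fin (k*n)) :=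
  Finset.univ.filter (fun x : Fin (k*n) =>
    (⟨(x.val + c) % (k*n+1), Nat.mod_lt _ (Nat.succ_pos _)⟩ : Fin (k*n+1)) ∈ T)

lemma mem_rotSet {T : Finset (Fin (k*n+1))} {c : ℕ} {x : Fin (k*n)} :
    x ∈ rotSet T c ↔ shf c x ∈ T := by
  simp [rotSet, shf]

lemma card_filter_rotSet (T : Finset (Fin (k*n+1))) (c : ℕ) {l : ℕ} (hl : l ≤ k*n) :
    ((rotSet T c).filter (fun x => x.val < l)).card = ccnt T c l := by
  unfold ccnt
  rw [← Finset.card_image_of_injective _ (Fin.val_injective (n := k*n))]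
  congr 1
  ext i
  simp only [Finset.mem_image, Finset.mem_filter, mem_rotSet, Finset.mem_range]
  constructor
  · rintro ⟨x, ⟨hx, hlt⟩, rfl⟩
    exact ⟨hlt, hx⟩
  · rintro ⟨hlt, hm⟩
    exact ⟨⟨i, by omega⟩, ⟨hm, hlt⟩, rfl⟩

lemma ccnt_N (T : Finset (Fin (k*n+1))) (hT : T.card = n) {c : ℕ} (hc : c < k*n+1) :
    ccnt T c (k*n+1) = n := by
  have h := ccnt_eq T c hc (k*n+1) (le_refl _)
  have hN : cnt T (k*n+1) = n := by rw [cnt_top T (le_refl _), hT]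
  by_cases h0 : c = 0
  · subst h0
    rw [if_pos (by omega)] at h
    rw [show 0 + (k*n+1) = k*n+1 by omega, hN, cnt_zero] at h
    omega
  · rw [if_neg (by omega)] at h
    rw [show c + (k*n+1) - (k*n+1) = c by omega, hN] at h
    omega

lemma ccnt_full (hk : 0 < k) (T : Finset (Fin (k*n+1))) (hT : T.card = n) {c : ℕ}
    (hc : c < k*n+1) (g : GoodD T c) :
    ccnt T c (k*n) = n ∧ ind T ((k*n+c) % (k*n+1)) = 0 := by
  have hsucc := ccnt_succ T c (k*n)
  have hN : ccnt T c (k*n+1) = n := ccnt_N T hT hc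
  have hind : ind T ((k*n+c) % (k*n+1)) ≤ 1 := by
    unfold ind; split <;> [skip; omega]; split <;> omega
  by_cases hn : n = 0
  · subst hn
    simp only [Nat.mul_zero] at *
    have : ccnt T c 0 = 0 := by simp [ccnt]
    omega
  · obtain ⟨m, rfl⟩ : ∃ m, n = m + 1 := ⟨n-1, by omega⟩
    have hg := g (k*(m+1)) (Nat.mul_pos hk (Nat.succ_pos m)) (le_refl _)
    have hmul : k * (m+1) = k * m + k := by ring
    have : ind T ((k*(m+1)+c) % (k*(m+1)+1)) = 0 := by
      by_contra hne
      have h1 : ind T ((k*(m+1)+c) % (k*(m+1)+1)) = 1 := by omega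
      have h2 : ccnt T c (k*(m+1)) = m := by omega
      rw [h2] at hg
      omega
    omega

lemma rotSet_card (hk : 0 < k) (T : Finset (Fin (k*n+1))) (hT : T.card = n) {c : ℕ}
    (hc : c < k*n+1) (g : GoodD T c) : (rotSet T c).card = n := by
  have h1 : (rotSet T c).filter (fun x => x.val < k*n) = rotSet T c :=
    Finset.filter_true_of_mem (fun x _ => x.isLt)
  have := card_filter_rotSet T c (l := k*n) (le_refl _)
  rw [h1] at this
  rw [this, (ccnt_full hk T hT hc g).1]

lemma dom_rotSet (hk : 0 < k) (T : Finset (Fin (k*n+1))) (hT : T.card = n) {c : ℕ}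
    (hc : c < k*n+1) (g : GoodD T c) : Dom k n (rotSet T c) := by
  refine ⟨rotSet_card hk T hT hc g, ?_⟩
  intro j hj
  have he : (rotSet T c).filter (fun x => x.val ≤ j) = (rotSet T c).filter (fun x => x.val < j+1) := by
    apply Finset.filter_congr; intro x _; constructor <;> omega
  rw [he, card_filter_rotSet T c (by omega : j+1 ≤ k*n)]
  exact g (j+1) (by omega) (by omega)

lemma image_rotSet (hk : 0 < k) (T : Finset (Fin (k*n+1))) (hT : T.card = n) {c : ℕ}
    (hc : c < k*n+1) (g : GoodD T c) : (rotSet T c).image (shf c) = T := by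
  apply Finset.eq_of_subset_of_card_le
  · intro y hy
    obtain ⟨x, hx, rfl⟩ := Finset.mem_image.1 hy
    exact mem_rotSet.1 hx
  · rw [Finset.card_image_of_injective _ (shf_injective c), rotSet_card hk T hT hc g, hT]

lemma good_of_dom (S : Finset (Fin (k*n))) (hS : Dom k n S) {c : ℕ} (hc : c < k*n+1) :
    GoodD (S.image (shf c)) c := by
  intro l hl1 hl2
  have hcc : ccnt (S.image (shf c)) c l = (S.filter (fun x => x.val < l)).card := by
    unfold ccnt
    rw [← Finset.card_image_of_injective (S.filter (fun x => x.val < l)) (Fin.val_injective (n := k*n))]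
    congr 1
    ext i
    simp only [Finset.mem_image, Finset.mem_filter, Finset.mem_range]
    constructor
    · rintro ⟨hlt, x, hx, hfx⟩
      have : (x.val + c) % (k*n+1) = (i + c) % (k*n+1) := congrArg Fin.val hfx
      have hxi : x.val = i := shf_inj c (by omega) (by omega) this
      exact ⟨x, ⟨hx, by omega⟩, hxi⟩
    · rintro ⟨x, ⟨hx, hlt⟩, rfl⟩
      exact ⟨hlt, x, hx, rfl⟩
  rw [hcc]
  have he : S.filter (fun x => x.val < l) = S.filter (fun x => x.val ≤ l - 1) := by
    apply Finset.filter_congr; intro x _; constructor <;> omega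
  rw [he]
  have := hS.2 (l-1) (by omega)
  omega

lemma card_image_shf (S : Finset (Fin (k*n))) {c : ℕ} :
    (S.image (shf c)).card = S.card :=
  Finset.card_image_of_injective _ (shf_injective c)

/-- The count of dominant sets. -/
theorem count_dom (hk : 0 < k) :
    (Nat.card {S : Finset (Fin (k*n)) // Dom k n S}) * (k*n+1) = (k*n+1).choose n := by
  classical
  have hbij : Function.Bijective
      (fun p : {S : Finset (Fin (k*n)) // Dom k n S} × Fin (k*n+1) =>
        (⟨p.1.1.image (shf p.2.val), by rw [card_image_shf, p.1.2.1]⟩ :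
          {T : Finset (Fin (k*n+1)) // T.card = n})) := by
    constructor
    · rintro ⟨⟨S, hS⟩, c⟩ ⟨⟨S', hS'⟩, c'⟩ h
      have hTeq : S.image (shf c.val) = S'.image (shf c'.val) := congrArg Subtype.val h
      have hTcard : (S.image (shf c.val)).card = n := by rw [card_image_shf, hS.1]
      have g1 := good_of_dom S hS c.isLt
      have g2 := good_of_dom S' hS' c'.isLt
      rw [← hTeq] at g2
      have hcc : c.val = c'.val := good_unique _ hTcard c.isLt c'.isLt g1 g2
      have hc : c = c' := Fin.ext hcc
      subst hc
      have hSS : S = S' := by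
        apply Finset.image_injective (shf_injective c.val)
        exact hTeq
      simp [hSS]
    · rintro ⟨T, hT⟩
      obtain ⟨c, hc, g⟩ := good_exists T hT
      refine ⟨⟨⟨rotSet T c, dom_rotSet hk T hT hc g⟩, ⟨c, hc⟩⟩, ?_⟩
      apply Subtype.ext
      exact image_rotSet hk T hT hc g
  have e := Nat.card_congr (Equiv.ofBijective _ hbij)
  rw [Nat.card_prod] at e
  rw [Nat.card_eq_fintype_card (α := Fin (k*n+1)), Fintype.card_fin] at e
  rw [Nat.card_eq_fintype_card (α := {T : Finset (Fin (k*n+1)) // T.card = n})] at e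
  rw [show (Fintype.card {T : Finset (Fin (k*n+1)) // T.card = n}) = (k*n+1).choose n from by
    rw [Fintype.card_finset_len, Fintype.card_fin]] at e
  rw [Nat.card_eq_fintype_card] at e ⊢
  exact e
end Count

section Part
variable {m : ℕ}

/-- set of block minima ("openers"). -/
noncomputable def ops (P : NCP m) : Finset (Fin m) :=
  Finset.univ.filter (fun x => ∀ y, pRel P x y → x ≤ y)

lemma mem_ops {P : NCP m} {x : Fin m} : x ∈ ops P ↔ ∀ y, pRel P x y → x ≤ y := by
  simp [ops]

lemma pRel_part {P : NCP m} {x y : Fin m} : pRel P x y ↔ y ∈ P.part x := by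
  constructor
  · rintro ⟨t, ht, hx, hy⟩
    rwa [P.part_eq_of_mem ht hx]
  · intro h
    exact ⟨P.part x, P.part_mem.2 (mem_univ x), P.mem_part (mem_univ x), h⟩

lemma pRel_of_mem {P : NCP m} {t : Finset (Fin m)} {x y : Fin m}
    (ht : t ∈ P.parts) (hx : x ∈ t) (hy : y ∈ t) : pRel P x y := ⟨t, ht, hx, hy⟩

lemma part_nonempty (P : NCP m) (x : Fin m) : (P.part x).Nonempty :=
  ⟨x, P.mem_part (mem_univ x)⟩

lemma min_mem_ops {P : NCP m} {t : Finset (Fin m)} (ht : t ∈ P.parts) (h : t.Nonempty) :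
    t.min' h ∈ ops P := by
  rw [mem_ops]
  intro y hy
  obtain ⟨u, hu, hxu, hyu⟩ := hy
  have : u = t := P.eq_of_mem_parts hu ht hxu (t.min'_mem h)
  subst this
  exact Finset.min'_le _ y hyu

lemma ops_le {P : NCP m} {x y : Fin m} (hx : x ∈ ops P) (hy : y ∈ P.part x) : x ≤ y :=
  mem_ops.1 hx y (pRel_part.2 hy)

lemma part_min' {P : NCP m} {x : Fin m} (hx : x ∈ ops P) :
    (P.part x).min' (part_nonempty P x) = x := by
  apply le_antisymm
  · exact Finset.min'_le _ _ (P.mem_part (mem_univ x))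
  · exact ops_le hx ((P.part x).min'_mem _)

lemma card_ops (P : NCP m) : (ops P).card = P.parts.card := by
  symm
  apply Finset.card_bij (fun t ht => t.min' (P.nonempty_of_mem_parts ht))
  · intro t ht
    exact min_mem_ops ht _
  · intro t ht u hu h
    exact P.eq_of_mem_parts ht hu (h ▸ t.min'_mem _) (u.min'_mem _)
  · intro x hx
    refine ⟨P.part x, P.part_mem.2 (mem_univ x), ?_⟩
    exact part_min' hx

lemma parts_card_mul {k : ℕ} (P : NCP m) (hK : IsKEqual k P) : P.parts.card * k = m := by
  have h1 : ∑ t ∈ P.parts, t.card = m := by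
    rw [P.sum_card_parts, Finset.card_univ, Fintype.card_fin]
  have h2 : ∑ t ∈ P.parts, t.card = P.parts.card * k := by
    rw [Finset.sum_congr rfl (fun t ht => hK t ht), Finset.sum_const, smul_eq_mul]
  omega

lemma card_Iic_fin {j : ℕ} (hj : j < m) :
    ((Finset.univ : Finset (Fin m)).filter (fun x => x.val ≤ j)).card = j + 1 := by
  rw [← Finset.card_image_of_injective _ (Fin.val_injective (n := m))]
  rw [show ((Finset.univ : Finset (Fin m)).filter (fun x => x.val ≤ j)).image Fin.val
      = Finset.range (j+1) from ?_]
  · exact Finset.card_range _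
  ext i
  simp only [Finset.mem_image, Finset.mem_filter, Finset.mem_univ, true_and, Finset.mem_range]
  constructor
  · rintro ⟨x, hx, rfl⟩; omega
  · intro hi; exact ⟨⟨i, by omega⟩, show i ≤ j by omega, rfl⟩

lemma ops_dom {k : ℕ} (P : NCP m) (hK : IsKEqual k P) {j : ℕ} (hj : j < m) :
    j + 1 ≤ k * ((ops P).filter (fun x => x.val ≤ j)).card := by
  classical
  set F := P.parts.filter (fun t => ∃ x ∈ t, x.val ≤ j) with hF
  have hsub : (Finset.univ : Finset (Fin m)).filter (fun x => x.val ≤ j) ⊆ F.biUnion id := by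
    intro x hx
    rw [Finset.mem_filter] at hx
    rw [Finset.mem_biUnion]
    refine ⟨P.part x, ?_, P.mem_part (mem_univ x)⟩
    rw [hF, Finset.mem_filter]
    exact ⟨P.part_mem.2 (mem_univ x), x, P.mem_part (mem_univ x), hx.2⟩
  have hcard1 : (F.biUnion id).card = ∑ t ∈ F, t.card := by
    apply Finset.card_biUnion
    intro t ht u hu hne
    exact P.disjoint (by exact Finset.mem_filter.1 ht |>.1) (by exact Finset.mem_filter.1 hu |>.1) hne
  have hcard2 : ∑ t ∈ F, t.card = F.card * k := by
    rw [Finset.sum_congr rfl (fun t ht => hK t (Finset.mem_filter.1 ht).1), Finset.sum_const,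
      smul_eq_mul]
  have hFops : F.card = ((ops P).filter (fun x => x.val ≤ j)).card := by
    apply Finset.card_bij (fun t ht => t.min' (P.nonempty_of_mem_parts (Finset.mem_filter.1 ht).1))
    · intro t ht
      obtain ⟨htp, x, hxt, hxj⟩ := Finset.mem_filter.1 ht
      rw [Finset.mem_filter]
      refine ⟨min_mem_ops htp _, ?_⟩
      have := t.min'_le x hxt
      have : (t.min' (P.nonempty_of_mem_parts htp)).val ≤ x.val := this
      omega
    · intro t ht u hu h
      exact P.eq_of_mem_parts (Finset.mem_filter.1 ht).1 (Finset.mem_filter.1 hu).1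
        (h ▸ t.min'_mem _) (u.min'_mem _)
    · intro x hx
      obtain ⟨hxop, hxj⟩ := Finset.mem_filter.1 hx
      refine ⟨P.part x, ?_, part_min' hxop⟩
      rw [Finset.mem_filter]
      exact ⟨P.part_mem.2 (mem_univ x), x, P.mem_part (mem_univ x), hxj⟩
  calc j + 1 = ((Finset.univ : Finset (Fin m)).filter (fun x => x.val ≤ j)).card :=
        (card_Iic_fin hj).symm
    _ ≤ (F.biUnion id).card := Finset.card_le_card hsub
    _ = F.card * k := by rw [hcard1, hcard2]
    _ = k * ((ops P).filter (fun x => x.val ≤ j)).card := by rw [hFops]; ring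
section EMB
variable {m' k M : ℕ}

/-- interval block as a finset. -/
def Ifil (M k : ℕ) (m : ℕ) : Finset (Fin m) :=
  Finset.univ.filter (fun x => M ≤ x.val ∧ x.val < M + k)

lemma mem_Ifil {x : Fin m} : x ∈ Ifil M k m ↔ M ≤ x.val ∧ x.val < M + k := by simp [Ifil]

/-- the order embedding skipping `[M, M+k)`. -/
def eF (M : ℕ) (hm' : m' + k = m) (x : Fin m') : Fin m :=
  if x.val < M then ⟨x.val, by omega⟩ else ⟨x.val + k, by have := x.isLt; omega⟩

variable (hm' : m' + k = m)

lemma eF_val (x : Fin m') : (eF M hm' x).val = if x.val < M then x.val else x.val + k := by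
  unfold eF; split <;> rfl

lemma eF_inj : Function.Injective (eF M hm') := by
  intro x y h
  have h' := congrArg Fin.val h
  rw [eF_val, eF_val] at h'
  apply Fin.ext
  split at h' <;> split at h' <;> omega

lemma eF_lt_iff {x y : Fin m'} : eF M hm' x < eF M hm' y ↔ x < y := by
  rw [Fin.lt_def, Fin.lt_def, eF_val, eF_val]
  split <;> split <;> omega

lemma eF_le_iff {x y : Fin m'} : eF M hm' x ≤ eF M hm' y ↔ x ≤ y := by
  rw [Fin.le_def, Fin.le_def, eF_val, eF_val]
  split <;> split <;> omega

lemma eF_not_mem_Ifil (x : Fin m') : eF M hm' x ∉ Ifil M k m := by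
  rw [mem_Ifil, eF_val]
  split <;> omega

lemma eF_ne_M (x : Fin m') (hk : 0 < k) : (eF M hm' x).val ≠ M := by
  rw [eF_val]; split <;> omega

lemma eF_surj {y : Fin m} (hy : y.val < M ∨ M + k ≤ y.val) (hM : M ≤ m') :
    ∃ x : Fin m', eF M hm' x = y := by
  rcases hy with hy | hy
  · refine ⟨⟨y.val, by omega⟩, Fin.ext ?_⟩
    rw [eF_val]
    simp only []
    rw [if_pos hy]
  · refine ⟨⟨y.val - k, by have := y.isLt; omega⟩, Fin.ext ?_⟩
    rw [eF_val]
    simp only []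
    rw [if_neg (by omega)]
    omega

/-- pull a block back along `eF`. -/
noncomputable def pull (M : ℕ) (hm' : m' + k = m) (s : Finset (Fin m)) : Finset (Fin m') :=
  Finset.univ.filter (fun x => eF M hm' x ∈ s)

lemma mem_pull {hm' : m' + k = m} {s : Finset (Fin m)} {x : Fin m'} :
    x ∈ pull M hm' s ↔ eF M hm' x ∈ s := by
  simp [pull]

variable {P : NCP m}

lemma part_avoid (hI : Ifil M k m ∈ P.parts)
    {s : Finset (Fin m)} (hs : s ∈ P.parts) (hne : s ≠ Ifil M k m)
    {y : Fin m} (hy : y ∈ s) : y.val < M ∨ M + k ≤ y.val := by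
  by_contra h
  push_neg at h
  have hyI : y ∈ Ifil M k m := mem_Ifil.2 ⟨h.1, by omega⟩
  exact hne (P.eq_of_mem_parts hs hI hy hyI)

lemma push_pull (hI : Ifil M k m ∈ P.parts)
    {s : Finset (Fin m)} (hs : s ∈ P.parts) (hne : s ≠ Ifil M k m) (hM : M ≤ m') :
    (pull M hm' s).image (eF M hm') = s := by
  ext y
  simp only [Finset.mem_image, mem_pull]
  constructor
  · rintro ⟨x, hx, rfl⟩; exact hx
  · intro hy
    obtain ⟨x, rfl⟩ := eF_surj hm' (part_avoid hI hs hne hy) hM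
    exact ⟨x, hy, rfl⟩

lemma card_pull (hI : Ifil M k m ∈ P.parts)
    {s : Finset (Fin m)} (hs : s ∈ P.parts) (hne : s ≠ Ifil M k m) (hM : M ≤ m') :
    (pull M hm' s).card = s.card := by
  calc (pull M hm' s).card = ((pull M hm' s).image (eF M hm')).card :=
        (Finset.card_image_of_injective _ (eF_inj hm')).symm
    _ = s.card := by rw [push_pull hm' hI hs hne hM]

/-- restriction of a partition having the interval block. -/
noncomputable def restrict (P : NCP m) (hI : Ifil M k m ∈ P.parts) (hM : M ≤ m')
    (hm' : m' + k = m) : NCP m' where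
  parts := (P.parts.erase (Ifil M k m)).image (pull M hm')
  supIndep := by
    rw [Finset.supIndep_iff_pairwiseDisjoint]
    rintro a ha b hb hab
    simp only [Finset.coe_image, Set.mem_image, Finset.mem_coe] at ha hb
    obtain ⟨s, hs, rfl⟩ := ha
    obtain ⟨u, hu, rfl⟩ := hb
    rw [Function.onFun, Finset.disjoint_left]
    intro x hxs hxu
    rw [id_eq, mem_pull] at hxs hxu
    exact hab (by rw [P.eq_of_mem_parts (Finset.mem_of_mem_erase hs)
      (Finset.mem_of_mem_erase hu) hxs hxu])
  sup_parts := by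
    apply le_antisymm
    · exact Finset.sup_le (fun s _ => Finset.subset_univ s)
    · intro x _
      rw [Finset.mem_sup]
      have hne : P.part (eF M hm' x) ≠ Ifil M k m := by
        intro h
        exact eF_not_mem_Ifil hm' x (h ▸ P.mem_part (mem_univ _))
      refine ⟨pull M hm' (P.part (eF M hm' x)), ?_, ?_⟩
      · exact Finset.mem_image_of_mem _ (Finset.mem_erase.2 ⟨hne, P.part_mem.2 (mem_univ _)⟩)
      · rw [id_eq, mem_pull]
        exact P.mem_part (mem_univ _)
  bot_notMem := by
    intro h
    simp only [Finset.bot_eq_empty, Finset.mem_image] at h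
    obtain ⟨s, hs, hpull⟩ := h
    have hsp := Finset.mem_of_mem_erase hs
    have hsne := Finset.ne_of_mem_erase hs
    obtain ⟨y, hy⟩ := P.nonempty_of_mem_parts hsp
    obtain ⟨x, rfl⟩ := eF_surj hm' (part_avoid hI hsp hsne hy) hM
    have : x ∈ pull M hm' s := mem_pull.2 hy
    rw [hpull] at this
    exact absurd this (Finset.notMem_empty x)

variable (hI : Ifil M k m ∈ P.parts) (hM : M ≤ m')

lemma mem_restrict_parts {s' : Finset (Fin m')} :
    s' ∈ (restrict P hI hM hm').parts ↔ ∃ s ∈ P.parts.erase (Ifil M k m), pull M hm' s = s' := by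
  simp [restrict]

lemma pRel_restrict {x y : Fin m'} :
    pRel (restrict P hI hM hm') x y ↔ pRel P (eF M hm' x) (eF M hm' y) := by
  constructor
  · rintro ⟨u, hu, hx, hy⟩
    obtain ⟨s, hs, rfl⟩ := (mem_restrict_parts hm' hI hM).1 hu
    exact ⟨s, Finset.mem_of_mem_erase hs, mem_pull.1 hx, mem_pull.1 hy⟩
  · rintro ⟨s, hs, hx, hy⟩
    have hne : s ≠ Ifil M k m := by
      rintro rfl
      exact eF_not_mem_Ifil hm' x hx
    refine ⟨pull M hm' s, (mem_restrict_parts hm' hI hM).2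
      ⟨s, Finset.mem_erase.2 ⟨hne, hs⟩, rfl⟩, mem_pull.2 hx, mem_pull.2 hy⟩

lemma NC_restrict (hNC : IsNonCrossing P) : IsNonCrossing (restrict P hI hM hm') := by
  intro a b c d hab hbc hcd h1 h2
  rw [pRel_restrict] at h1 h2 ⊢
  exact hNC _ _ _ _ ((eF_lt_iff hm').2 hab) ((eF_lt_iff hm').2 hbc) ((eF_lt_iff hm').2 hcd) h1 h2

lemma KEq_restrict {k' : ℕ} (hK : IsKEqual k' P) : IsKEqual k' (restrict P hI hM hm') := by
  intro s' hs'
  obtain ⟨s, hs, rfl⟩ := (mem_restrict_parts hm' hI hM).1 hs'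
  rw [card_pull hm' hI (Finset.mem_of_mem_erase hs) (Finset.ne_of_mem_erase hs) hM]
  exact hK s (Finset.mem_of_mem_erase hs)

lemma ops_restrict : ops (restrict P hI hM hm') = pull M hm' (ops P) := by
  ext x
  rw [mem_ops, mem_pull, mem_ops]
  constructor
  · intro h y hy
    -- y related to eF x in P; y is not in the interval
    obtain ⟨s, hs, hx, hy'⟩ := hy
    have hne : s ≠ Ifil M k m := fun he => eF_not_mem_Ifil hm' x (he ▸ hx)
    obtain ⟨y', rfl⟩ := eF_surj hm' (part_avoid hI hs hne hy') hM
    rw [eF_le_iff]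
    exact h y' ((pRel_restrict hm' hI hM).2 ⟨s, hs, hx, hy'⟩)
  · intro h y hy
    rw [← eF_le_iff hm' (M := M)]
    exact h _ ((pRel_restrict hm' hI hM).1 hy)

lemma parts_eq_insert :
    P.parts = insert (Ifil M k m) (((restrict P hI hM hm').parts).image (fun s => s.image (eF M hm'))) := by
  have himg : ((restrict P hI hM hm').parts).image (fun s => s.image (eF M hm'))
      = P.parts.erase (Ifil M k m) := by
    ext s
    simp only [Finset.mem_image]
    constructor
    · rintro ⟨s', hs', rfl⟩
      obtain ⟨u, hu, rfl⟩ := (mem_restrict_parts hm' hI hM).1 hs'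
      rw [push_pull hm' hI (Finset.mem_of_mem_erase hu) (Finset.ne_of_mem_erase hu) hM]
      exact hu
    · intro hs
      refine ⟨pull M hm' s, (mem_restrict_parts hm' hI hM).2 ⟨s, hs, rfl⟩, ?_⟩
      exact push_pull hm' hI (Finset.mem_of_mem_erase hs) (Finset.ne_of_mem_erase hs) hM
  rw [himg, Finset.insert_erase hI]
lemma card_vint {a b : ℕ} (hb : b < m) :
    ((Finset.univ : Finset (Fin m)).filter (fun x => a ≤ x.val ∧ x.val ≤ b)).card = b + 1 - a := by
  rw [← Finset.card_image_of_injective _ (Fin.val_injective (n := m))]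
  rw [show ((Finset.univ : Finset (Fin m)).filter (fun x => a ≤ x.val ∧ x.val ≤ b)).image Fin.val
      = Finset.Icc a b from ?_]
  · rw [Nat.card_Icc]
  ext i
  simp only [Finset.mem_image, Finset.mem_filter, Finset.mem_univ, true_and, Finset.mem_Icc]
  constructor
  · rintro ⟨x, hx, rfl⟩; omega
  · intro hi; exact ⟨⟨i, by omega⟩, ⟨show a ≤ i by omega, show i ≤ b by omega⟩, rfl⟩

lemma opener_le (P : NCP m) (x : Fin m) : ∃ b ∈ ops P, b ≤ x ∧ pRel P b x := by
  refine ⟨(P.part x).min' (part_nonempty P x),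
    min_mem_ops (P.part_mem.2 (mem_univ x)) _, Finset.min'_le _ _ (P.mem_part (mem_univ x)),
    pRel_of_mem (P.part_mem.2 (mem_univ x)) (Finset.min'_mem _ _) (P.mem_part (mem_univ x))⟩

end EMB

section EMB2
variable {m' k M : ℕ}

lemma Ifil_nonempty (hm' : m' + k = m) (hM : M ≤ m') (hk : 0 < k) : (Ifil M k m).Nonempty :=
  ⟨⟨M, by omega⟩, mem_Ifil.2 ⟨le_refl M, show M < M + k by omega⟩⟩

lemma card_Ifil (hm' : m' + k = m) (hM : M ≤ m') (hk : 0 < k) : (Ifil M k m).card = k := by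
  have he : Ifil M k m = (Finset.univ : Finset (Fin m)).filter
      (fun x => M ≤ x.val ∧ x.val ≤ M + k - 1) := by
    unfold Ifil
    apply Finset.filter_congr
    intro x _
    constructor <;> rintro ⟨h1, h2⟩ <;> exact ⟨h1, by omega⟩
  rw [he, card_vint (by omega)]
  omega

/-- Extension of a partition by the interval block `[M, M+k)`. -/
noncomputable def extend (hm' : m' + k = m) (hM : M ≤ m') (hk : 0 < k) (P' : NCP m') : NCP m where
  parts := insert (Ifil M k m) ((P'.parts).image (fun s => s.image (eF M hm')))
  supIndep := by
    rw [Finset.supIndep_iff_pairwiseDisjoint]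
    rintro a ha b hb hab
    simp only [Finset.coe_insert, Set.mem_insert_iff, Finset.coe_image, Set.mem_image,
      Finset.mem_coe] at ha hb
    rw [Function.onFun, id_eq, id_eq, Finset.disjoint_left]
    intro x hxa hxb
    rcases ha with rfl | ⟨s, hs, rfl⟩
    · rcases hb with rfl | ⟨u, hu, rfl⟩
      · exact hab rfl
      · obtain ⟨u', _, rfl⟩ := Finset.mem_image.1 hxb
        exact eF_not_mem_Ifil hm' u' hxa
    · rcases hb with rfl | ⟨u, hu, rfl⟩
      · obtain ⟨s', _, rfl⟩ := Finset.mem_image.1 hxa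
        exact eF_not_mem_Ifil hm' s' hxb
      · obtain ⟨s', hs', rfl⟩ := Finset.mem_image.1 hxa
        obtain ⟨u', hu', he⟩ := Finset.mem_image.1 hxb
        have : u' = s' := eF_inj hm' he
        subst this
        have : s = u := P'.eq_of_mem_parts hs hu hs' hu'
        exact hab (by rw [this])
  sup_parts := by
    apply le_antisymm
    · exact Finset.sup_le (fun s _ => Finset.subset_univ s)
    · intro y _
      rw [Finset.mem_sup]
      by_cases hy : y ∈ Ifil M k m
      · exact ⟨Ifil M k m, Finset.mem_insert_self _ _, hy⟩
      · have hy' : y.val < M ∨ M + k ≤ y.val := by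
          rw [mem_Ifil] at hy
          omega
        obtain ⟨x, rfl⟩ := eF_surj hm' hy' hM
        refine ⟨(P'.part x).image (eF M hm'), ?_, ?_⟩
        · exact Finset.mem_insert_of_mem (Finset.mem_image_of_mem _ (P'.part_mem.2 (mem_univ x)))
        · exact Finset.mem_image_of_mem _ (P'.mem_part (mem_univ x))
  bot_notMem := by
    intro h
    rcases Finset.mem_insert.1 h with h | h
    · obtain ⟨x, hx⟩ := Ifil_nonempty (hm' := hm') (hM := hM) (hk := hk)
      rw [← h] at hx
      exact absurd hx (Finset.notMem_empty x)
    · obtain ⟨s, hs, he⟩ := Finset.mem_image.1 h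
      obtain ⟨y, hy⟩ := P'.nonempty_of_mem_parts hs
      have : eF M hm' y ∈ (⊥ : Finset (Fin m)) := he ▸ Finset.mem_image_of_mem _ hy
      exact absurd this (Finset.notMem_empty _)

variable {P' : NCP m'}

lemma mem_extend_parts (hm' : m' + k = m) (hM : M ≤ m') (hk : 0 < k) {s : Finset (Fin m)} :
    s ∈ (extend hm' hM hk P').parts ↔
      s = Ifil M k m ∨ ∃ s' ∈ P'.parts, s'.image (eF M hm') = s := by
  simp [extend]

lemma KEq_extend (hm' : m' + k = m) (hM : M ≤ m') (hk : 0 < k) (hK : IsKEqual k P') : IsKEqual k (extend hm' hM hk P') := by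
  intro s hs
  rcases (mem_extend_parts hm' hM hk).1 hs with rfl | ⟨s', hs', rfl⟩
  · exact card_Ifil hm' hM hk
  · rw [Finset.card_image_of_injective _ (eF_inj hm')]
    exact hK s' hs'

lemma pRel_extend (hm' : m' + k = m) (hM : M ≤ m') (hk : 0 < k) {x y : Fin m} :
    pRel (extend hm' hM hk P') x y ↔
      (x ∈ Ifil M k m ∧ y ∈ Ifil M k m) ∨
      ∃ x' y', eF M hm' x' = x ∧ eF M hm' y' = y ∧ pRel P' x' y' := by
  constructor
  · rintro ⟨t, ht, hx, hy⟩
    rcases (mem_extend_parts hm' hM hk).1 ht with rfl | ⟨s', hs', rfl⟩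
    · exact Or.inl ⟨hx, hy⟩
    · obtain ⟨x', hx', rfl⟩ := Finset.mem_image.1 hx
      obtain ⟨y', hy', rfl⟩ := Finset.mem_image.1 hy
      exact Or.inr ⟨x', y', rfl, rfl, ⟨s', hs', hx', hy'⟩⟩
  · rintro (⟨hx, hy⟩ | ⟨x', y', rfl, rfl, ⟨s', hs', hx', hy'⟩⟩)
    · exact ⟨Ifil M k m, Finset.mem_insert_self _ _, hx, hy⟩
    · refine ⟨s'.image (eF M hm'), (mem_extend_parts hm' hM hk).2 (Or.inr ⟨s', hs', rfl⟩), ?_, ?_⟩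
      · exact Finset.mem_image_of_mem _ hx'
      · exact Finset.mem_image_of_mem _ hy'

lemma NC_extend (hm' : m' + k = m) (hM : M ≤ m') (hk : 0 < k) (hNC : IsNonCrossing P') : IsNonCrossing (extend hm' hM hk P') := by
  intro a b c d hab hbc hcd h1 h2
  rw [pRel_extend] at h1 h2 ⊢
  rcases h1 with ⟨haI, hcI⟩ | ⟨a', c', rfl, rfl, h1'⟩
  · left
    refine ⟨haI, mem_Ifil.2 ?_⟩
    rw [mem_Ifil] at haI hcI
    have h1 := (Fin.lt_def).1 hab
    have h2 := (Fin.lt_def).1 hbc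
    omega
  · rcases h2 with ⟨hbI, hdI⟩ | ⟨b', d', rfl, rfl, h2'⟩
    · exfalso
      have hb := mem_Ifil.1 hbI
      have hd := mem_Ifil.1 hdI
      apply eF_not_mem_Ifil (M := M) hm' c'
      apply mem_Ifil.2
      have h1 := (Fin.lt_def).1 hbc
      have h2 := (Fin.lt_def).1 hcd
      omega
    · right
      refine ⟨a', b', rfl, rfl, hNC a' b' c' d' ?_ ?_ ?_ h1' h2'⟩
      · exact (eF_lt_iff hm').1 hab
      · exact (eF_lt_iff hm').1 hbc
      · exact (eF_lt_iff hm').1 hcd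

lemma ops_extend (hm' : m' + k = m) (hM : M ≤ m') (hk : 0 < k) :
    ops (extend hm' hM hk P') = insert ⟨M, by omega⟩ ((ops P').image (eF M hm')) := by
  have hMI : (⟨M, by omega⟩ : Fin m) ∈ Ifil M k m :=
    mem_Ifil.2 ⟨le_refl M, show M < M + k by omega⟩
  ext x
  rw [mem_ops, Finset.mem_insert]
  by_cases hx : x ∈ Ifil M k m
  · constructor
    · intro h
      left
      have h1 : x ≤ ⟨M, by omega⟩ := h _ ((pRel_extend hm' hM hk).2 (Or.inl ⟨hx, hMI⟩))
      have h2 : M ≤ x.val := (mem_Ifil.1 hx).1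
      exact Fin.ext (by rw [Fin.le_def] at h1; simp only [] at h1 ⊢; omega)
    · rintro (rfl | hmem)
      · intro y hy
        rcases (pRel_extend hm' hM hk).1 hy with ⟨_, hyI⟩ | ⟨x', y', hxx, rfl, _⟩
        · rw [Fin.le_def]
          exact (mem_Ifil.1 hyI).1
        · exact absurd (hxx ▸ hx) (eF_not_mem_Ifil hm' x')
      · obtain ⟨x', _, rfl⟩ := Finset.mem_image.1 hmem
        exact absurd hx (eF_not_mem_Ifil hm' x')
  · have hx' : x.val < M ∨ M + k ≤ x.val := by rw [mem_Ifil] at hx; omega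
    obtain ⟨x', rfl⟩ := eF_surj hm' hx' hM
    constructor
    · intro h
      right
      rw [Finset.mem_image]
      refine ⟨x', mem_ops.2 ?_, rfl⟩
      intro y' hrel
      have := h (eF M hm' y') ((pRel_extend hm' hM hk).2 (Or.inr ⟨x', y', rfl, rfl, hrel⟩))
      exact (eF_le_iff hm').1 this
    · rintro (he | hmem)
      · exact absurd (he ▸ hMI) (eF_not_mem_Ifil hm' x')
      · obtain ⟨o, ho, he⟩ := Finset.mem_image.1 hmem
        have : o = x' := eF_inj hm' he
        subst this
        intro y hy
        rcases (pRel_extend hm' hM hk).1 hy with ⟨hxI, _⟩ | ⟨x'', y', hxx, rfl, hrel⟩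
        · exact absurd hxI (eF_not_mem_Ifil hm' o)
        · have : x'' = o := eF_inj hm' hxx
          subst this
          exact (eF_le_iff hm').2 (mem_ops.1 ho y' hrel)
end EMB2

lemma interval_block {k : ℕ} (hk : 0 < k) (P : NCP m) (hNC : IsNonCrossing P)
    (hK : IsKEqual k P) {M : Fin m} (hMops : M ∈ ops P) (hMmax : ∀ x ∈ ops P, x ≤ M) :
    M.val + k ≤ m ∧ P.part M = Ifil M.val k m := by
  set t := P.part M with htdef
  have ht : t ∈ P.parts := P.part_mem.2 (mem_univ M)
  have htc : t.card = k := hK t ht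
  have hmin : ∀ y ∈ t, M ≤ y := fun y hy => ops_le hMops hy
  have step : ∀ j, j < k → ∀ i, i ≤ j →
      ∃ (hlt : M.val + i < m), (⟨M.val + i, hlt⟩ : Fin m) ∈ t := by
    intro j
    induction j with
    | zero =>
      intro _ i hi
      have hi0 : i = 0 := by omega
      subst hi0
      refine ⟨by have := M.isLt; omega, ?_⟩
      have he : (⟨M.val + 0, by have := M.isLt; omega⟩ : Fin m) = M := Fin.ext rfl
      rw [he]
      exact P.mem_part (mem_univ M)
    | succ j IH =>
      intro hjk i hij
      by_cases hi' : i ≤ j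
      · exact IH (by omega) i hi'
      · have hi : i = j + 1 := by omega
        subst hi
        have hIsub : ∀ x : Fin m, M.val ≤ x.val → x.val ≤ M.val + j → x ∈ t := by
          intro x h1 h2
          obtain ⟨hlt, hmem⟩ := IH (by omega) (x.val - M.val) (by omega)
          have he : (⟨M.val + (x.val - M.val), hlt⟩ : Fin m) = x := Fin.ext (by simp; omega)
          rwa [he] at hmem
        obtain ⟨hltj, hmemj⟩ := IH (by omega) j (le_refl j)
        have hex : ∃ e ∈ t, M.val + j < e.val := by
          by_contra hno
          push_neg at hno
          have hsub2 : t ⊆ (Finset.univ : Finset (Fin m)).filter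
              (fun x => M.val ≤ x.val ∧ x.val ≤ M.val + j) := by
            intro y hy
            exact Finset.mem_filter.2 ⟨mem_univ y, hmin y hy, hno y hy⟩
          have hcard := Finset.card_le_card hsub2
          rw [htc, card_vint (by omega)] at hcard
          omega
        obtain ⟨e, het, he⟩ := hex
        have hltnew : M.val + (j+1) < m := by have := e.isLt; omega
        refine ⟨hltnew, ?_⟩
        by_contra hxt
        have hxe : (⟨M.val + (j+1), hltnew⟩ : Fin m) < e := by
          have hne : e ≠ (⟨M.val + (j+1), hltnew⟩ : Fin m) := fun h => hxt (h ▸ het)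
          have hne' : e.val ≠ M.val + (j+1) := fun h => hne (Fin.ext h)
          rw [Fin.lt_def]
          simp only []
          omega
        obtain ⟨b, hbops, hbx, hbrel⟩ := opener_le P ⟨M.val + (j+1), hltnew⟩
        have hbM : b < M := by
          have hble : b ≤ M := hMmax b hbops
          have hbne : b ≠ M := by
            rintro rfl
            exact hxt (pRel_part.1 hbrel)
          exact lt_of_le_of_ne hble hbne
        have hyjx : (⟨M.val + j, hltj⟩ : Fin m) < (⟨M.val + (j+1), hltnew⟩ : Fin m) := by
          rw [Fin.lt_def]; simp only []; omega
        have hbyj : b < (⟨M.val + j, hltj⟩ : Fin m) := by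
          rw [Fin.lt_def]
          have : b.val < M.val := hbM
          simp only []; omega
        have hcross := hNC b ⟨M.val + j, hltj⟩ ⟨M.val + (j+1), hltnew⟩ e
          hbyj hyjx hxe hbrel (pRel_of_mem ht hmemj het)
        obtain ⟨u, hu, hbu, hyju⟩ := hcross
        have hut : u = t := P.eq_of_mem_parts hu ht hyju hmemj
        subst hut
        have := hmin b hbu
        have : M.val ≤ b.val := this
        have : b.val < M.val := hbM
        omega
  have hMk : M.val + k ≤ m := by
    obtain ⟨hlt, _⟩ := step (k-1) (by omega) (k-1) (le_refl _)
    omega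
  refine ⟨hMk, ?_⟩
  symm
  apply Finset.eq_of_subset_of_card_le
  · intro x hx
    obtain ⟨h1, h2⟩ := mem_Ifil.1 hx
    obtain ⟨hlt, hmem⟩ := step (k-1) (by omega) (x.val - M.val) (by omega)
    have he : (⟨M.val + (x.val - M.val), hlt⟩ : Fin m) = x := Fin.ext (by simp; omega)
    rwa [he] at hmem
  · rw [htc, card_Ifil (show (m-k)+k = m by omega) (show M.val ≤ m - k by omega) hk]
lemma ops_card_eq {k n : ℕ} (hk : 0 < k) (P : NCP (k*n)) (hK : IsKEqual k P) :
    (ops P).card = n := by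
  have h1 : (ops P).card * k = k*n := by rw [card_ops]; exact parts_card_mul P hK
  rw [mul_comm] at h1
  exact Nat.eq_of_mul_eq_mul_left hk h1

theorem main (k : ℕ) (hk : 0 < k) : ∀ n : ℕ,
    (∀ P Q : NCP (k*n), IsNonCrossing P → IsKEqual k P → IsNonCrossing Q → IsKEqual k Q →
      ops P = ops Q → P = Q) ∧
    (∀ S : Finset (Fin (k*n)), Dom k n S → ∃ P : NCP (k*n),
      IsNonCrossing P ∧ IsKEqual k P ∧ ops P = S) := by
  intro n
  induction n with
  | zero =>
    haveI hemp : IsEmpty (Fin (k*0)) := ⟨fun x => by have := x.isLt; omega⟩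
    have hparts : ∀ P : NCP (k*0), P.parts = ∅ := by
      intro P
      rw [Finset.eq_empty_iff_forall_notMem]
      intro t ht
      obtain ⟨x, _⟩ := P.nonempty_of_mem_parts ht
      exact hemp.false x
    constructor
    · intro P Q _ _ _ _ _
      apply Finpartition.ext
      rw [hparts P, hparts Q]
    · intro S hS
      refine ⟨⟨∅, by simp [Finset.SupIndep], by simp [Finset.univ_eq_empty], by simp⟩, ?_, ?_, ?_⟩
      · intro a; exact (hemp.false a).elim
      · intro t ht; exact absurd ht (Finset.notMem_empty t)
      · have h1 : ops (⟨∅, by simp [Finset.SupIndep], by simp [Finset.univ_eq_empty], by simp⟩ :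
            NCP (k*0)) = ∅ := Finset.eq_empty_of_isEmpty _
        have h2 : S = ∅ := Finset.eq_empty_of_isEmpty _
        rw [h1, h2]
  | succ p IH =>
    have hm' : k*p + k = k*(p+1) := by ring
    constructor
    · -- injectivity
      intro P Q hNCP hKP hNCQ hKQ hops
      have hScard : (ops P).card = p + 1 := ops_card_eq hk P hKP
      have hSne : (ops P).Nonempty := Finset.card_pos.1 (by omega)
      set M := (ops P).max' hSne with hMdef
      have hMops : M ∈ ops P := Finset.max'_mem _ _
      have hMmax : ∀ x ∈ ops P, x ≤ M := fun x hx => Finset.le_max' _ x hx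
      obtain ⟨hMk, hpartP⟩ := interval_block hk P hNCP hKP hMops hMmax
      have hMopsQ : M ∈ ops Q := hops ▸ hMops
      have hMmaxQ : ∀ x ∈ ops Q, x ≤ M := fun x hx => hMmax x (hops ▸ hx)
      obtain ⟨_, hpartQ⟩ := interval_block hk Q hNCQ hKQ hMopsQ hMmaxQ
      have hIP : Ifil M.val k (k*(p+1)) ∈ P.parts := hpartP ▸ P.part_mem.2 (mem_univ M)
      have hIQ : Ifil M.val k (k*(p+1)) ∈ Q.parts := hpartQ ▸ Q.part_mem.2 (mem_univ M)
      have hMle : M.val ≤ k*p := by omega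
      have hre : restrict P hIP hMle hm' = restrict Q hIQ hMle hm' := by
        apply (IH.1 _ _)
        · exact NC_restrict hm' hIP hMle hNCP
        · exact KEq_restrict hm' hIP hMle hKP
        · exact NC_restrict hm' hIQ hMle hNCQ
        · exact KEq_restrict hm' hIQ hMle hKQ
        · rw [ops_restrict hm' hIP hMle, ops_restrict hm' hIQ hMle, hops]
      apply Finpartition.ext
      rw [parts_eq_insert hm' hIP hMle, parts_eq_insert hm' hIQ hMle, hre]
    · -- surjectivity
      intro S hS
      have hScard : S.card = p + 1 := hS.1
      have hSne : S.Nonempty := Finset.card_pos.1 (by omega)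
      set M := S.max' hSne with hMdef
      have hMS : M ∈ S := Finset.max'_mem _ _
      have hMmax : ∀ x ∈ S, x ≤ M := fun x hx => Finset.le_max' _ x hx
      have hMle : M.val ≤ k*p := by
        by_cases hM0 : M.val = 0
        · have hsub : S ⊆ {M} := by
            intro x hx
            rw [Finset.mem_singleton]
            have := hMmax x hx
            rw [Fin.le_def] at this
            exact Fin.ext (by omega)
          have hc := Finset.card_le_card hsub
          rw [Finset.card_singleton, hScard] at hc
          have hp0 : p = 0 := by omega
          have : k * p = 0 := by rw [hp0, mul_zero]
          omega
        · have hdom := hS.2 (M.val - 1) (by have := M.isLt; omega)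
          have hers : S.filter (fun x => x.val ≤ M.val - 1) = S.erase M := by
            ext x
            rw [Finset.mem_filter, Finset.mem_erase]
            constructor
            · rintro ⟨hx, hle⟩
              refine ⟨fun he => ?_, hx⟩
              rw [he] at hle
              omega
            · rintro ⟨hne, hx⟩
              refine ⟨hx, ?_⟩
              have := hMmax x hx
              rw [Fin.le_def] at this
              have hne' : x.val ≠ M.val := fun h => hne (Fin.ext h)
              omega
          rw [hers, Finset.card_erase_of_mem hMS, hScard] at hdom
          simp only [Nat.add_sub_cancel] at hdom
          omega
      set S' := pull M.val hm' S with hS'def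
      have hpush : S'.image (eF M.val hm') = S.erase M := by
        ext y
        rw [Finset.mem_image, Finset.mem_erase]
        constructor
        · rintro ⟨x, hx, rfl⟩
          rw [hS'def, mem_pull] at hx
          exact ⟨fun h => eF_ne_M hm' x hk (congrArg Fin.val h), hx⟩
        · rintro ⟨hne, hy⟩
          have hyM : y.val < M.val := by
            have := hMmax y hy
            rw [Fin.le_def] at this
            have : y.val ≠ M.val := fun h => hne (Fin.ext h)
            omega
          obtain ⟨x, rfl⟩ := eF_surj hm' (Or.inl hyM) hMle
          exact ⟨x, mem_pull.2 hy, rfl⟩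
      have hS'card : S'.card = p := by
        have h1 : (S'.image (eF M.val hm')).card = S'.card :=
          Finset.card_image_of_injective _ (eF_inj hm')
        rw [hpush, Finset.card_erase_of_mem hMS, hScard] at h1
        omega
      have hS'mem : ∀ x ∈ S', x.val < M.val := by
        intro x hx
        rw [hS'def, mem_pull] at hx
        have h1 := hMmax _ hx
        rw [Fin.le_def, eF_val] at h1
        split at h1 <;> omega
      have hS'dom : Dom k p S' := by
        refine ⟨hS'card, ?_⟩
        intro j hj
        by_cases hjM : j < M.val
        · have himg : (S'.filter (fun x => x.val ≤ j)).image (eF M.val hm')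
              = S.filter (fun x => x.val ≤ j) := by
            ext y
            rw [Finset.mem_image, Finset.mem_filter]
            constructor
            · rintro ⟨x, hx, rfl⟩
              rw [Finset.mem_filter, hS'def, mem_pull] at hx
              rw [eF_val]
              rw [if_pos (by omega)]
              exact ⟨hx.1, hx.2⟩
            · rintro ⟨hy, hle⟩
              obtain ⟨x, rfl⟩ := eF_surj hm' (Or.inl (show y.val < M.val by omega)) hMle
              refine ⟨x, Finset.mem_filter.2 ⟨mem_pull.2 hy, ?_⟩, rfl⟩
              rw [eF_val] at hle
              split at hle <;> omega
          have hcc : (S'.filter (fun x => x.val ≤ j)).card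
              = (S.filter (fun x => x.val ≤ j)).card := by
            rw [← himg, Finset.card_image_of_injective _ (eF_inj hm')]
          rw [hcc]
          exact hS.2 j (by have h2 : k*p ≤ k*(p+1) := Nat.mul_le_mul_left k (by omega); omega)
        · have hall : S'.filter (fun x => x.val ≤ j) = S' :=
            Finset.filter_true_of_mem (fun x hx => by have := hS'mem x hx; omega)
          rw [hall, hS'card]
          omega
      obtain ⟨P', hNC', hK', hops'⟩ := IH.2 S' hS'dom
      refine ⟨extend hm' hMle hk P', NC_extend hm' hMle hk hNC',
        KEq_extend hm' hMle hk hK', ?_⟩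
      rw [ops_extend hm' hMle hk, hops', hpush]
      have hMM : (⟨M.val, by omega⟩ : Fin (k*(p+1))) = M := Fin.ext rfl
      rw [hMM, Finset.insert_erase hMS]
end Part
end NCPaux

/-- The number of `k`-equal non-crossing partitions of `{1,…,kn}` is
`binom(kn, n) / ((k-1)n + 1)`. -/
theorem stmt0 (k n : ℕ) (hk : 0 < k) (hn : 0 < n) :
    Nat.card {P : NCP (k * n) // IsNonCrossing P ∧ IsKEqual k P} =
      (k * n).choose n / ((k - 1) * n + 1) := by
  classical
  have hmain := NCPaux.main k hk n
  have hdom : ∀ P : {P : NCP (k*n) // IsNonCrossing P ∧ IsKEqual k P}, Dom k n (NCPaux.ops P.1) :=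
    fun P => ⟨NCPaux.ops_card_eq hk P.1 P.2.2, fun j hj => NCPaux.ops_dom P.1 P.2.2 hj⟩
  have hbij : Function.Bijective
      (fun P : {P : NCP (k*n) // IsNonCrossing P ∧ IsKEqual k P} =>
        (⟨NCPaux.ops P.1, hdom P⟩ : {S : Finset (Fin (k*n)) // Dom k n S})) := by
    constructor
    · rintro ⟨P, hP⟩ ⟨Q, hQ⟩ h
      have h2 := congrArg Subtype.val h
      exact Subtype.ext (hmain.1 P Q hP.1 hP.2 hQ.1 hQ.2 h2)
    · rintro ⟨S, hS⟩
      obtain ⟨P, h1, h2, h3⟩ := hmain.2 S hS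
      exact ⟨⟨P, h1, h2⟩, Subtype.ext h3⟩
  rw [Nat.card_congr (Equiv.ofBijective _ hbij)]
  exact NCP_arith k n _ hk (NCPaux.count_dom hk)
end

section
/- The number of non-crossing partitions of the set {1,...,kn} in which every block has size divisible by k equals binom((k+1)n, n) / (kn + 1). -/
open scoped BigOperators Classical

namespace KDivNC

/-- periodic extension of a tuple -/
def extg (k n : ℕ) (g : Fin (k*n+1) → ℕ) (i : ℕ) : ℕ :=
  g ⟨i % (k*n+1), Nat.mod_lt _ (Nat.succ_pos _)⟩

/-- cumulative sums of the periodic extension -/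
def ccg (k n : ℕ) (g : Fin (k*n+1) → ℕ) (t : ℕ) : ℕ :=
  ∑ i ∈ Finset.range t, extg k n g i

/-- the "height" function -/
def Tg (k n : ℕ) (g : Fin (k*n+1) → ℕ) (t : ℕ) : ℤ :=
  (k : ℤ) * ccg k n g t - t

/-- rotation of a tuple -/
def rotg (k n : ℕ) (r : Fin (k*n+1)) (g : Fin (k*n+1) → ℕ) : Fin (k*n+1) → ℕ :=
  fun i => g (i + r)

/-- goodness: all proper prefix heights are nonnegative -/
def Goodg (k n : ℕ) (g : Fin (k*n+1) → ℕ) : Prop :=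
  ∀ j, 0 < j → j ≤ k*n → j ≤ k * ccg k n g j

variable {k n : ℕ}

lemma extg_rot (r : Fin (k*n+1)) (g : Fin (k*n+1) → ℕ) (i : ℕ) :
    extg k n (rotg k n r g) i = extg k n g (i + r.val) := by
  unfold extg rotg
  congr 1
  rw [Fin.add_def]
  apply Fin.ext
  simp only []
  conv_rhs => rw [Nat.add_mod]
  rw [Nat.mod_eq_of_lt r.isLt]

lemma extg_period (g : Fin (k*n+1) → ℕ) (i : ℕ) :
    extg k n g (i + (k*n+1)) = extg k n g i := by
  unfold extg; congr 1; exact Fin.ext (Nat.add_mod_right i _)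

lemma ccg_zero (g : Fin (k*n+1) → ℕ) : ccg k n g 0 = 0 := rfl

lemma ccg_succ (g : Fin (k*n+1) → ℕ) (t : ℕ) :
    ccg k n g (t+1) = ccg k n g t + extg k n g t := Finset.sum_range_succ _ _

lemma ccg_mono (g : Fin (k*n+1) → ℕ) {t t' : ℕ} (h : t ≤ t') :
    ccg k n g t ≤ ccg k n g t' := by
  induction t' with
  | zero => interval_cases t; rfl
  | succ u ih =>
    rcases Nat.lt_or_ge t (u+1) with h'|h'
    · have := ih (by omega)
      rw [ccg_succ]; omega
    · have : t = u + 1 := by omega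
      rw [this]

lemma ccg_rot (r : Fin (k*n+1)) (g : Fin (k*n+1) → ℕ) (j : ℕ) :
    ccg k n (rotg k n r g) j + ccg k n g r.val = ccg k n g (j + r.val) := by
  induction j with
  | zero => simp [ccg_zero]
  | succ u ih =>
    rw [ccg_succ, extg_rot]
    have : u + 1 + r.val = (u + r.val) + 1 := by omega
    rw [this, ccg_succ]
    omega

lemma ccg_full (g : Fin (k*n+1) → ℕ) (hs : ∑ i, g i = n) :
    ccg k n g (k*n+1) = n := by
  unfold ccg
  rw [← Fin.sum_univ_eq_sum_range (fun i => extg k n g i) (k*n+1)]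
  have : ∑ i : Fin (k*n+1), extg k n g i.val = ∑ i, g i := by
    apply Finset.sum_congr rfl
    intro x _
    unfold extg
    congr 1
    exact Fin.ext (Nat.mod_eq_of_lt x.isLt)
  rw [this, hs]

lemma ccg_period (g : Fin (k*n+1) → ℕ) (hs : ∑ i, g i = n) (t : ℕ) :
    ccg k n g (t + (k*n+1)) = ccg k n g t + n := by
  induction t with
  | zero => simpa [ccg_zero] using ccg_full g hs
  | succ u ih =>
    have : u + 1 + (k*n+1) = (u + (k*n+1)) + 1 := by omega
    rw [this, ccg_succ, ih, ccg_succ, extg_period]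
    omega

lemma Tg_period (g : Fin (k*n+1) → ℕ) (hs : ∑ i, g i = n) (t : ℕ) :
    Tg k n g (t + (k*n+1)) = Tg k n g t - 1 := by
  unfold Tg
  rw [ccg_period g hs]
  push_cast
  ring

/-- goodness of a rotation expressed via the height function of the original -/
lemma good_rot_iff (r : Fin (k*n+1)) (g : Fin (k*n+1) → ℕ) :
    Goodg k n (rotg k n r g) ↔
      ∀ j, 0 < j → j ≤ k*n → Tg k n g r.val ≤ Tg k n g (j + r.val) := by
  unfold Goodg Tg
  apply forall_congr'
  intro j
  apply imp_congr Iff.rfl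
  apply imp_congr Iff.rfl
  have hc := ccg_rot r g j
  constructor
  · intro h
    have : (j : ℤ) ≤ (k : ℤ) * (ccg k n (rotg k n r g) j) := by exact_mod_cast h
    have h2 : (ccg k n (rotg k n r g) j : ℤ) = ccg k n g (j + r.val) - ccg k n g r.val := by
      have := hc; push_cast [← this]; ring
    push_cast
    rw [h2] at this
    linarith
  · intro h
    have h2 : (ccg k n (rotg k n r g) j : ℤ) = ccg k n g (j + r.val) - ccg k n g r.val := by
      have := hc; push_cast [← this]; ring
    have : (j : ℤ) ≤ (k : ℤ) * (ccg k n (rotg k n r g) j) := by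
      rw [h2]; push_cast at h ⊢; linarith
    exact_mod_cast this

lemma exists_good_rot (g : Fin (k*n+1) → ℕ) (hs : ∑ i, g i = n) :
    ∃ r : Fin (k*n+1), Goodg k n (rotg k n r g) := by
  -- minimum value of Tg over [0, k*n+1)
  obtain ⟨t₀, ht₀mem, ht₀⟩ := Finset.exists_min_image (Finset.range (k*n+1)) (Tg k n g)
    ⟨0, Finset.mem_range.mpr (Nat.succ_pos _)⟩
  have ht₀lt : t₀ < k*n+1 := Finset.mem_range.mp ht₀mem
  have hex : ∃ t, t < k*n+1 ∧ Tg k n g t = Tg k n g t₀ := ⟨t₀, ht₀lt, rfl⟩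
  classical
  set r := Nat.find hex with hr
  obtain ⟨hrlt, hrval⟩ := Nat.find_spec hex
  have hmin : ∀ t, t < k*n+1 → Tg k n g t₀ ≤ Tg k n g t := by
    intro t ht; exact ht₀ t (Finset.mem_range.mpr ht)
  have hlt_r : ∀ t, t < r → Tg k n g t₀ + 1 ≤ Tg k n g t := by
    intro t ht
    have h1 : Tg k n g t₀ ≤ Tg k n g t := hmin t (by omega)
    have h2 : ¬ (t < k*n+1 ∧ Tg k n g t = Tg k n g t₀) := Nat.find_min hex ht
    have : Tg k n g t ≠ Tg k n g t₀ := fun h => h2 ⟨by omega, h⟩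
    omega
  refine ⟨⟨r, hrlt⟩, ?_⟩
  rw [good_rot_iff]
  intro j hj hjle
  simp only
  rw [hrval]
  rcases Nat.lt_or_ge (j + r) (k*n+1) with h|h
  · exact hmin _ h
  · have hu : j + r = (j + r - (k*n+1)) + (k*n+1) := by omega
    rw [hu, Tg_period g hs]
    have : j + r - (k*n+1) < r := by omega
    have := hlt_r _ this
    omega

lemma unique_good_rot (g : Fin (k*n+1) → ℕ) (hs : ∑ i, g i = n)
    {r r' : Fin (k*n+1)} (h : Goodg k n (rotg k n r g)) (h' : Goodg k n (rotg k n r' g)) :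
    r = r' := by
  rw [good_rot_iff] at h h'
  by_contra hne
  have hvne : r.val ≠ r'.val := fun hv => hne (Fin.ext hv)
  have hr := r.isLt
  have hr' := r'.isLt
  -- WLOG via symmetric argument
  have key : ∀ a b : ℕ, a < k*n+1 → b < k*n+1 → a < b →
      (∀ j, 0 < j → j ≤ k*n → Tg k n g a ≤ Tg k n g (j + a)) →
      (∀ j, 0 < j → j ≤ k*n → Tg k n g b ≤ Tg k n g (j + b)) → False := by
    intro a b ha hb hab Ha Hb
    have h1 : Tg k n g a ≤ Tg k n g b := by
      have := Ha (b - a) (by omega) (by omega)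
      have he : b - a + a = b := by omega
      rwa [he] at this
    have h2 : Tg k n g b ≤ Tg k n g (a + (k*n+1)) := by
      have := Hb (a + (k*n+1) - b) (by omega) (by omega)
      have he : a + (k*n+1) - b + b = a + (k*n+1) := by omega
      rwa [he] at this
    rw [Tg_period g hs] at h2
    omega
  rcases Nat.lt_or_ge r.val r'.val with hlt|hge
  · exact key r.val r'.val hr hr' hlt h h'
  · exact key r'.val r.val hr' hr (by omega) h' h

lemma rot_rot (r r' : Fin (k*n+1)) (g : Fin (k*n+1) → ℕ) :
    rotg k n r (rotg k n r' g) = rotg k n (r + r') g := by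
  funext i
  unfold rotg
  congr 1
  rw [add_assoc]

lemma rot_zero (g : Fin (k*n+1) → ℕ) : rotg k n 0 g = g := by
  funext i; unfold rotg; rw [add_zero]

lemma sum_rot (r : Fin (k*n+1)) (g : Fin (k*n+1) → ℕ) :
    ∑ i, rotg k n r g i = ∑ i, g i := by
  unfold rotg
  exact Fintype.sum_equiv (Equiv.addRight r) _ _ (fun i => rfl)

/-- the tuples with sum `n` -/
def AllT (k n : ℕ) := {g : Fin (k*n+1) → ℕ // ∑ i, g i = n}

/-- the good tuples with sum `n` -/
def GoodT (k n : ℕ) := {g : Fin (k*n+1) → ℕ // (∑ i, g i = n) ∧ Goodg k n g}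

def Psi (k n : ℕ) : GoodT k n × Fin (k*n+1) → AllT k n :=
  fun p => ⟨rotg k n p.2 p.1.val, by rw [sum_rot]; exact p.1.prop.1⟩

lemma Psi_bij : Function.Bijective (Psi k n) := by
  constructor
  · rintro ⟨⟨g, hg, hgood⟩, t⟩ ⟨⟨g', hg', hgood'⟩, t'⟩ heq
    have heq' : rotg k n t g = rotg k n t' g' := congrArg Subtype.val heq
    have h2 := congrArg (rotg k n (-t')) heq'
    rw [rot_rot, rot_rot, neg_add_cancel, rot_zero] at h2
    have hgrot : g' = rotg k n (-t' + t) g := h2.symm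
    have hgood0 : Goodg k n (rotg k n 0 g) := by rwa [rot_zero]
    have hgoodtt : Goodg k n (rotg k n (-t' + t) g) := by rwa [← hgrot]
    have h0 : -t' + t = (0 : Fin (k*n+1)) :=
      (unique_good_rot g hg hgoodtt hgood0)
    rw [neg_add_eq_sub] at h0
    have htt : t = t' := sub_eq_zero.mp h0
    have hgg : g = g' := by
      rw [hgrot, htt, neg_add_cancel, rot_zero]
    subst hgg; subst htt; rfl
  · rintro ⟨g, hg⟩
    obtain ⟨r, hr⟩ := exists_good_rot g hg
    refine ⟨⟨⟨rotg k n r g, by rw [sum_rot]; exact hg, hr⟩, -r⟩, ?_⟩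
    unfold Psi
    apply Subtype.ext
    simp only
    rw [rot_rot, neg_add_cancel, rot_zero]

lemma card_AllT (k n : ℕ) : Nat.card (AllT k n) = ((k+1)*n).choose n := by
  have e := Sym.equivNatSumOfFintype (Fin (k*n+1)) n
  have : Nat.card (AllT k n) = Nat.card (Sym (Fin (k*n+1)) n) := Nat.card_congr e.symm
  rw [this, Nat.card_eq_fintype_card, Sym.card_sym_eq_choose]
  congr 1
  simp [Fintype.card_fin]
  ring

lemma card_GoodT (k n : ℕ) : Nat.card (GoodT k n) = ((k+1)*n).choose n / (k*n+1) := by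
  have h1 : Nat.card (AllT k n) = Nat.card (GoodT k n × Fin (k*n+1)) :=
    (Nat.card_congr (Equiv.ofBijective _ (Psi_bij (k := k) (n := n)))).symm
  rw [Nat.card_prod, Nat.card_eq_fintype_card (α := Fin (k*n+1)), Fintype.card_fin] at h1
  rw [card_AllT] at h1
  rw [h1, Nat.mul_div_cancel _ (Nat.succ_pos _)]

section Leader

variable (k : ℕ) (S : ℕ → ℕ)

/-- pick the leader of the next element, given the list of previous leaders -/
def pickL (L : List ℕ) : ℕ :=
  if 0 < S L.length then L.length
  else Nat.findGreatest (fun j => L.count j < k * S j) L.length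

/-- the list of leaders of `0, …, i-1` -/
def LL : ℕ → List ℕ
  | 0 => []
  | i + 1 => LL i ++ [pickL k S (LL i)]

/-- the leader (future block minimum) of element `i` -/
def leader (i : ℕ) : ℕ := pickL k S (LL k S i)

/-- how many of `0, …, i-1` have leader `j` -/
def fillc (j i : ℕ) : ℕ := (LL k S i).count j

variable {k S}

lemma LL_length (i : ℕ) : (LL k S i).length = i := by
  induction i with
  | zero => rfl
  | succ u ih => simp [LL, ih]

lemma LL_eq (i : ℕ) : LL k S i = (List.range i).map (leader k S) := by
  induction i with
  | zero => rfl
  | succ u ih =>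
    have h1 : LL k S (u+1) = LL k S u ++ [leader k S u] := rfl
    rw [h1, ih, List.range_succ, List.map_append]
    rfl

lemma leader_eq (i : ℕ) :
    leader k S i = if 0 < S i then i
      else Nat.findGreatest (fun j => fillc k S j i < k * S j) i := by
  unfold leader pickL fillc
  rw [LL_length]

lemma leader_le (i : ℕ) : leader k S i ≤ i := by
  rw [leader_eq]
  split
  · exact le_refl _
  · exact Nat.findGreatest_le i

lemma leader_of_pos {i : ℕ} (h : 0 < S i) : leader k S i = i := by
  rw [leader_eq, if_pos h]

lemma fillc_zero (j : ℕ) : fillc k S j 0 = 0 := rfl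

lemma fillc_succ (j i : ℕ) :
    fillc k S j (i+1) = fillc k S j i + (if leader k S i = j then 1 else 0) := by
  have h1 : LL k S (i+1) = LL k S i ++ [leader k S i] := rfl
  unfold fillc
  rw [h1, List.count_append]
  congr 1
  rcases eq_or_ne (leader k S i) j with h|h
  · rw [if_pos h, h]
    simp
  · rw [if_neg h]
    apply List.count_eq_zero_of_not_mem
    simp [Ne.symm h]

lemma fillc_mono {i i' : ℕ} (j : ℕ) (h : i ≤ i') : fillc k S j i ≤ fillc k S j i' := by
  induction i' with
  | zero => interval_cases i; exact le_refl _
  | succ u ih =>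
    rcases Nat.lt_or_ge i (u+1) with h'|h'
    · have := ih (by omega)
      rw [fillc_succ]
      split <;> omega
    · have : i = u + 1 := by omega
      rw [this]

lemma fillc_of_ge {j i : ℕ} (h : i ≤ j) : fillc k S j i = 0 := by
  unfold fillc
  apply List.count_eq_zero_of_not_mem
  rw [LL_eq]
  intro hmem
  obtain ⟨t, ht, hl⟩ := List.mem_map.mp hmem
  have := List.mem_range.mp ht
  have := leader_le (k := k) (S := S) t
  omega

lemma sum_fillc {c i : ℕ} (h : ∀ t, t < i → leader k S t < c) :
    ∑ j ∈ Finset.range c, fillc k S j i = i := by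
  induction i with
  | zero => simp [fillc_zero]
  | succ u ih =>
    have hih := ih (fun t ht => h t (by omega))
    have : ∀ j ∈ Finset.range c, fillc k S j (u+1) =
        fillc k S j u + (if leader k S u = j then 1 else 0) :=
      fun j _ => fillc_succ j u
    rw [Finset.sum_congr rfl this, Finset.sum_add_distrib, hih,
      Finset.sum_ite_eq (Finset.range c) (leader k S u) (fun _ => 1)]
    rw [if_pos (Finset.mem_range.mpr (h u (by omega)))]

section Invariant

variable {k n m : ℕ} {S : ℕ → ℕ}

lemma inv_main (hk : 0 < k)
    (hH2 : ∀ i, i < m → i + 1 ≤ k * ∑ j ∈ Finset.range (i+1), S j) :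
    ∀ i, i ≤ m → (∀ j, fillc k S j i ≤ k * S j) ∧
      (∀ t, t < i → fillc k S (leader k S t) t < k * S (leader k S t)) := by
  intro i
  induction i with
  | zero =>
    intro _
    exact ⟨fun j => by rw [fillc_zero]; omega, fun t ht => by omega⟩
  | succ u ih =>
    intro hum
    obtain ⟨A, B⟩ := ih (by omega)
    have key : fillc k S (leader k S u) u < k * S (leader k S u) := by
      by_cases h : 0 < S u
      · rw [leader_of_pos h, fillc_of_ge (le_refl u)]
        exact Nat.mul_pos hk h
      · have hlead : leader k S u =
            Nat.findGreatest (fun j => fillc k S j u < k * S j) u := by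
          rw [leader_eq, if_neg h]
        have hsum : ∑ j ∈ Finset.range (u+1), fillc k S j u = u :=
          sum_fillc (fun t ht => lt_of_le_of_lt (leader_le t) (by omega))
        have hlt : ∑ j ∈ Finset.range (u+1), fillc k S j u <
            ∑ j ∈ Finset.range (u+1), k * S j := by
          rw [hsum, ← Finset.mul_sum]
          have := hH2 u (by omega)
          omega
        obtain ⟨j, hjmem, hjlt⟩ := Finset.exists_lt_of_sum_lt hlt
        have hj_le : j ≤ u := by have := Finset.mem_range.mp hjmem; omega
        rw [hlead]
        exact Nat.findGreatest_spec (P := fun j => fillc k S j u < k * S j) hj_le hjlt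
    refine ⟨?_, ?_⟩
    · intro j
      rw [fillc_succ]
      by_cases hle : leader k S u = j
      · rw [if_pos hle]
        have := key
        rw [hle] at this
        omega
      · rw [if_neg hle]
        have := A j
        omega
    · intro t ht
      rcases Nat.lt_or_ge t u with h'|h'
      · exact B t h'
      · have : t = u := by omega
        subst this
        exact key

lemma leader_S_pos (hk : 0 < k)
    (hH2 : ∀ i, i < m → i + 1 ≤ k * ∑ j ∈ Finset.range (i+1), S j)
    {i : ℕ} (hi : i < m) : 0 < S (leader k S i) := by
  have := (inv_main hk hH2 m le_rfl).2 i hi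
  by_contra h
  have h0 : S (leader k S i) = 0 := by omega
  rw [h0, Nat.mul_zero] at this
  omega

lemma fillc_final (hk : 0 < k) (hm : m = k * n)
    (hS0 : ∀ j, m ≤ j → S j = 0)
    (hsum : ∑ j ∈ Finset.range m, S j = n)
    (hH2 : ∀ i, i < m → i + 1 ≤ k * ∑ j ∈ Finset.range (i+1), S j) :
    ∀ j, fillc k S j m = k * S j := by
  intro j
  by_cases hjm : j < m
  · by_contra hne
    have hA : ∀ x ∈ Finset.range m, fillc k S x m ≤ k * S x :=
      fun x _ => (inv_main hk hH2 m le_rfl).1 x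
    have hstrict : fillc k S j m < k * S j :=
      lt_of_le_of_ne (hA j (Finset.mem_range.mpr hjm)) hne
    have hlt : ∑ x ∈ Finset.range m, fillc k S x m < ∑ x ∈ Finset.range m, k * S x :=
      Finset.sum_lt_sum hA ⟨j, Finset.mem_range.mpr hjm, hstrict⟩
    rw [sum_fillc (fun t ht => lt_of_le_of_lt (leader_le t) ht),
      ← Finset.mul_sum, hsum, ← hm] at hlt
    omega
  · have h0 : S j = 0 := hS0 j (by omega)
    have hb := (inv_main hk hH2 m le_rfl).1 j
    rw [h0] at hb ⊢
    omega

lemma leader_nest (hk : 0 < k)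
    (hH2 : ∀ i, i < m → i + 1 ≤ k * ∑ j ∈ Finset.range (i+1), S j)
    {t t' : ℕ} (htt' : t < t') (ht' : t' < m) (hle : leader k S t' ≤ t) :
    leader k S t' ≤ leader k S t := by
  have hkey := (inv_main hk hH2 m le_rfl).2 t' ht'
  by_cases h : 0 < S t
  · rw [leader_of_pos h]
    exact hle
  · rw [leader_eq t, if_neg h]
    exact Nat.le_findGreatest hle
      (lt_of_le_of_lt (fillc_mono _ (le_of_lt htt')) hkey)

lemma leader_idem (hk : 0 < k)
    (hH2 : ∀ i, i < m → i + 1 ≤ k * ∑ j ∈ Finset.range (i+1), S j)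
    {i : ℕ} (hi : i < m) : leader k S (leader k S i) = leader k S i :=
  leader_of_pos (leader_S_pos hk hH2 hi)

end Invariant

end Leader

section Partition

/-- generic: `pRel` via `part` -/
lemma pRel_iff_mem_part {N : ℕ} (P : NCP N) (x y : Fin N) :
    pRel P x y ↔ y ∈ P.part x := by
  constructor
  · rintro ⟨t, ht, hx, hy⟩
    rwa [P.part_eq_of_mem ht hx]
  · intro h
    exact ⟨P.part x, P.part_mem.2 (Finset.mem_univ x), P.mem_part (Finset.mem_univ x), h⟩

lemma exists_part_rep {N : ℕ} (P : NCP N) {t : Finset (Fin N)} (ht : t ∈ P.parts) :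
    ∃ x, x ∈ t ∧ P.part x = t := by
  obtain ⟨x, hx⟩ := P.nonempty_of_mem_parts ht
  exact ⟨x, hx, P.part_eq_of_mem ht hx⟩

variable (k n : ℕ) (S : ℕ → ℕ)

/-- the leader function on `Fin (k*n)` -/
def leaderFin : Fin (k*n) → Fin (k*n) :=
  fun x => ⟨leader k S x.val, lt_of_le_of_lt (leader_le x.val) x.isLt⟩

/-- the partition associated to a sequence -/
noncomputable def partnOf : NCP (k*n) :=
  Finpartition.ofSetoid
    (Setoid.mk (fun x y => leaderFin k n S x = leaderFin k n S y)
      ⟨fun _ => rfl, Eq.symm, Eq.trans⟩)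

variable {k n S}

lemma pRel_partnOf (x y : Fin (k*n)) :
    pRel (partnOf k n S) x y ↔ leaderFin k n S x = leaderFin k n S y := by
  rw [pRel_iff_mem_part]
  exact Finpartition.mem_part_ofSetoid_iff_rel

lemma part_partnOf (x : Fin (k*n)) :
    (partnOf k n S).part x =
      Finset.univ.filter (fun y => leaderFin k n S x = leaderFin k n S y) := by
  ext y
  rw [Finset.mem_filter]
  constructor
  · intro h
    exact ⟨Finset.mem_univ y, Finpartition.mem_part_ofSetoid_iff_rel.mp h⟩
  · intro h
    exact Finpartition.mem_part_ofSetoid_iff_rel.mpr h.2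

lemma card_filter_univ_fin (m : ℕ) (p : ℕ → Prop) :
    (Finset.univ.filter (fun x : Fin m => p x.val)).card = ((Finset.range m).filter p).card := by
  apply Finset.card_bij (fun (x : Fin m) _ => x.val)
  · intro x hx
    rw [Finset.mem_filter] at hx ⊢
    exact ⟨Finset.mem_range.mpr x.isLt, hx.2⟩
  · intro x _ y _ h
    exact Fin.ext h
  · intro b hb
    rw [Finset.mem_filter] at hb
    refine ⟨⟨b, Finset.mem_range.mp hb.1⟩, ?_, rfl⟩
    rw [Finset.mem_filter]
    exact ⟨Finset.mem_univ _, hb.2⟩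

lemma fillc_eq_card_filter (j i : ℕ) :
    fillc k S j i = ((Finset.range i).filter (fun t => leader k S t = j)).card := by
  induction i with
  | zero => simp [fillc_zero]
  | succ u ih =>
    rw [fillc_succ, ih, Finset.range_add_one, Finset.filter_insert]
    split
    · rw [Finset.card_insert_of_notMem (fun hc => by
        have := Finset.mem_range.mp (Finset.filter_subset _ _ hc); omega)]
    · omega

/-- cardinality of a block of `partnOf` -/
lemma card_part_partnOf (x : Fin (k*n)) :
    ((partnOf k n S).part x).card = fillc k S (leader k S x.val) (k*n) := by
  rw [part_partnOf]
  have : (Finset.univ.filter (fun y => leaderFin k n S x = leaderFin k n S y)) =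
      (Finset.univ.filter (fun y : Fin (k*n) => leader k S y.val = leader k S x.val)) := by
    apply Finset.filter_congr
    intro y _
    constructor
    · intro h; exact (congrArg Fin.val h).symm
    · intro h; exact Fin.ext h.symm
  rw [this]
  have h2 := card_filter_univ_fin (k*n) (fun v => leader k S v = leader k S x.val)
  rw [fillc_eq_card_filter]
  convert h2 using 2 <;>
  · ext y
    simp only [Finset.mem_filter]

variable (hk : 0 < k)
  (hS0 : ∀ j, k*n ≤ j → S j = 0)
  (hsum : ∑ j ∈ Finset.range (k*n), S j = n)
  (hH2 : ∀ i, i < k*n → i + 1 ≤ k * ∑ j ∈ Finset.range (i+1), S j)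

include hk hH2 in
lemma partnOf_NC : IsNonCrossing (partnOf k n S) := by
  intro a b c d hab hbc hcd h1 h2
  rw [pRel_partnOf] at h1 h2 ⊢
  have h1v : leader k S a.val = leader k S c.val := congrArg Fin.val h1
  have h2v : leader k S b.val = leader k S d.val := congrArg Fin.val h2
  have hd : d.val < k*n := d.isLt
  have hc : c.val < k*n := c.isLt
  have s1 : leader k S d.val ≤ leader k S c.val := by
    apply leader_nest hk hH2 (Fin.lt_def.mp hcd) hd
    rw [← h2v]
    exact le_trans (leader_le b.val) (le_of_lt (Fin.lt_def.mp hbc))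
  have s2 : leader k S c.val ≤ leader k S b.val := by
    apply leader_nest hk hH2 (Fin.lt_def.mp hbc) hc
    rw [← h1v]
    exact le_trans (leader_le a.val) (le_of_lt (Fin.lt_def.mp hab))
  apply Fin.ext
  show leader k S a.val = leader k S b.val
  omega

include hk hS0 hsum hH2 in
lemma partnOf_kdiv : IsKDivisible k (partnOf k n S) := by
  intro t ht
  obtain ⟨x, hx, hpart⟩ := exists_part_rep _ ht
  rw [← hpart, card_part_partnOf, fillc_final hk rfl hS0 hsum hH2]
  exact Dvd.intro _ rfl

end Partition

section MinF

variable {N : ℕ} (P : NCP N)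

/-- the minimum of the block containing `x` -/
noncomputable def minF (x : Fin N) : Fin N :=
  (P.part x).min' ⟨x, P.mem_part (Finset.mem_univ x)⟩

lemma minF_mem (x : Fin N) : minF P x ∈ P.part x := Finset.min'_mem _ _

lemma minF_le (x : Fin N) : minF P x ≤ x :=
  Finset.min'_le _ x (P.mem_part (Finset.mem_univ x))

lemma minF_le_of_mem {x y : Fin N} (h : y ∈ P.part x) : minF P x ≤ y :=
  Finset.min'_le _ y h

lemma part_minF (x : Fin N) : P.part (minF P x) = P.part x :=
  P.part_eq_of_mem (P.part_mem.2 (Finset.mem_univ x)) (minF_mem P x)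

lemma minF_eq_of_part_eq {x y : Fin N} (h : P.part x = P.part y) :
    minF P x = minF P y := by
  unfold minF
  congr 1

lemma minF_idem (x : Fin N) : minF P (minF P x) = minF P x :=
  minF_eq_of_part_eq P (part_minF P x)

lemma part_eq_iff_minF {x y : Fin N} : P.part x = P.part y ↔ minF P x = minF P y := by
  constructor
  · exact minF_eq_of_part_eq P
  · intro h
    rw [← part_minF P x, h, part_minF P y]

lemma mem_part_iff_minF {x y : Fin N} : y ∈ P.part x ↔ minF P y = minF P x := by
  rw [P.mem_part_iff_part_eq_part (Finset.mem_univ y) (Finset.mem_univ x)]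
  exact part_eq_iff_minF P

lemma pRel_iff_minF {x y : Fin N} : pRel P x y ↔ minF P x = minF P y := by
  rw [pRel_iff_mem_part, mem_part_iff_minF]
  exact eq_comm

end MinF

section SOfSec

variable {k n : ℕ}

/-- the sequence of (block size)/k at block minima -/
noncomputable def SOf (k : ℕ) {N : ℕ} (P : NCP N) : ℕ → ℕ :=
  fun i => if h : i < N then
    (if minF P ⟨i, h⟩ = ⟨i, h⟩ then (P.part ⟨i, h⟩).card / k else 0)
  else 0

variable {N : ℕ} (P : NCP N)

lemma SOf_of_ge {i : ℕ} (h : N ≤ i) : SOf k P i = 0 := by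
  unfold SOf
  rw [dif_neg (by omega)]

lemma SOf_of_min {x : Fin N} (h : minF P x = x) :
    SOf k P x.val = (P.part x).card / k := by
  unfold SOf
  rw [dif_pos x.isLt]
  rw [if_pos (by simpa using h)]

lemma SOf_of_not_min {x : Fin N} (h : ¬ minF P x = x) :
    SOf k P x.val = 0 := by
  unfold SOf
  rw [dif_pos x.isLt]
  rw [if_neg (by simpa using h)]

variable (hk : 0 < k) (hKD : IsKDivisible k P)

include hKD in
lemma k_dvd_card_part (x : Fin N) : k ∣ (P.part x).card :=
  hKD _ (P.part_mem.2 (Finset.mem_univ x))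

include hk hKD in
lemma k_mul_SOf {x : Fin N} (h : minF P x = x) :
    k * SOf k P x.val = (P.part x).card := by
  rw [SOf_of_min P h]
  exact Nat.mul_div_cancel' (k_dvd_card_part P hKD x)

include hk hKD in
lemma SOf_min_pos {x : Fin N} (h : minF P x = x) : 0 < SOf k P x.val := by
  have h1 := k_mul_SOf P hk hKD h
  have h2 : 0 < (P.part x).card :=
    Finset.card_pos.mpr ⟨x, P.mem_part (Finset.mem_univ x)⟩
  by_contra hc
  have : SOf k P x.val = 0 := by omega
  rw [this, Nat.mul_zero] at h1
  omega

/-- generic: sums over `range c` equal sums over `Fin N` restricted to `val < c` -/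
lemma sum_range_eq_sum_fin (c : ℕ) (hc : c ≤ N) (F : ℕ → ℕ) :
    ∑ j ∈ Finset.range c, F j =
      ∑ x ∈ Finset.univ.filter (fun x : Fin N => x.val < c), F x.val := by
  symm
  apply Finset.sum_bij (fun (x : Fin N) _ => x.val)
  · intro x hx
    rw [Finset.mem_filter] at hx
    exact Finset.mem_range.mpr hx.2
  · intro x _ y _ h
    exact Fin.ext h
  · intro b hb
    have hbc : b < c := Finset.mem_range.mp hb
    refine ⟨⟨b, by omega⟩, ?_, rfl⟩
    rw [Finset.mem_filter]
    exact ⟨Finset.mem_univ _, hbc⟩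
  · intro x _
    rfl

include hk hKD in
lemma sum_SOf_prefix (c : ℕ) (hc : c ≤ N) :
    k * ∑ j ∈ Finset.range c, SOf k P j =
      ∑ x ∈ Finset.univ.filter (fun x : Fin N => minF P x = x ∧ x.val < c),
        (P.part x).card := by
  rw [Finset.mul_sum, sum_range_eq_sum_fin (N := N) c hc (fun j => k * SOf k P j)]
  have hsplit : Finset.univ.filter (fun x : Fin N => minF P x = x ∧ x.val < c)
      = (Finset.univ.filter (fun x : Fin N => x.val < c)).filter
          (fun x => minF P x = x) := by
    rw [Finset.filter_filter]
    apply Finset.filter_congr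
    intro x _
    exact and_comm
  rw [hsplit]
  conv_rhs => rw [Finset.sum_filter]
  apply Finset.sum_congr rfl
  intro x hx
  by_cases h : minF P x = x
  · rw [if_pos h, k_mul_SOf P hk hKD h]
  · rw [if_neg h, SOf_of_not_min P h, Nat.mul_zero]

include hk hKD in
lemma k_mul_sum_SOf_total : k * ∑ j ∈ Finset.range N, SOf k P j = N := by
  rw [sum_SOf_prefix P hk hKD N le_rfl]
  have hfil : Finset.univ.filter (fun x : Fin N => minF P x = x ∧ x.val < N)
      = Finset.univ.filter (fun x : Fin N => minF P x = x) := by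
    apply Finset.filter_congr
    intro x _
    exact and_iff_left x.isLt
  rw [hfil]
  have hbij : ∑ x ∈ Finset.univ.filter (fun x : Fin N => minF P x = x),
      (P.part x).card = ∑ t ∈ P.parts, t.card := by
    apply Finset.sum_bij (fun x _ => P.part x)
    · intro x _
      exact P.part_mem.2 (Finset.mem_univ x)
    · intro x hx y hy h
      rw [Finset.mem_filter] at hx hy
      rw [← hx.2, ← hy.2]
      exact minF_eq_of_part_eq P h
    · intro t ht
      obtain ⟨x0, hx0, hpart⟩ := exists_part_rep P ht
      refine ⟨minF P x0, ?_, ?_⟩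
      · rw [Finset.mem_filter]
        exact ⟨Finset.mem_univ _, minF_idem P x0⟩
      · rw [part_minF P x0, hpart]
    · intro x _
      rfl
  rw [hbij, Finpartition.sum_card_parts, Finset.card_univ, Fintype.card_fin]

include hk hKD in
lemma prefix_bound_SOf {i : ℕ} (hi : i < N) :
    i + 1 ≤ k * ∑ j ∈ Finset.range (i+1), SOf k P j := by
  rw [sum_SOf_prefix P hk hKD (i+1) (by omega)]
  set Mi := Finset.univ.filter (fun x : Fin N => minF P x = x ∧ x.val < i+1) with hMi
  have hsub : Finset.univ.filter (fun x : Fin N => x.val < i+1) ⊆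
      Mi.biUnion (fun x => P.part x) := by
    intro y hy
    rw [Finset.mem_filter] at hy
    rw [Finset.mem_biUnion]
    refine ⟨minF P y, ?_, ?_⟩
    · rw [hMi, Finset.mem_filter]
      refine ⟨Finset.mem_univ _, minF_idem P y, ?_⟩
      have := minF_le P y
      have : (minF P y).val ≤ y.val := this
      omega
    · rw [part_minF P y]
      exact P.mem_part (Finset.mem_univ y)
  have hcard1 : (Finset.univ.filter (fun x : Fin N => x.val < i+1)).card = i+1 := by
    have heq : (Finset.univ.filter (fun x : Fin N => x.val < i+1)).card
        = (Finset.range (i+1)).card := by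
      apply Finset.card_bij (fun x _ => x.val)
      · intro x hx
        rw [Finset.mem_filter] at hx
        exact Finset.mem_range.mpr hx.2
      · intro x _ y _ h
        exact Fin.ext h
      · intro b hb
        have hb' := Finset.mem_range.mp hb
        exact ⟨⟨b, by omega⟩, by rw [Finset.mem_filter]; exact ⟨Finset.mem_univ _, hb'⟩, rfl⟩
    rw [heq, Finset.card_range]
  calc i + 1 = (Finset.univ.filter (fun x : Fin N => x.val < i+1)).card := hcard1.symm
    _ ≤ (Mi.biUnion (fun x => P.part x)).card := Finset.card_le_card hsub
    _ ≤ ∑ x ∈ Mi, (P.part x).card := Finset.card_biUnion_le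

end SOfSec

section RoundTrip

variable {k n : ℕ} (P : NCP (k*n))

lemma leader_SOf (hk : 0 < k) (hNC : IsNonCrossing P) (hKD : IsKDivisible k P) :
    ∀ v : ℕ, ∀ hv : v < k*n, leader k (SOf k P) v = (minF P ⟨v, hv⟩).val := by
  intro v
  induction v using Nat.strong_induction_on with
  | _ v IH =>
    intro hv
    set x : Fin (k*n) := ⟨v, hv⟩ with hxdef
    have hxv : (x : ℕ) = v := rfl
    by_cases hmin : minF P x = x
    · have hpos : 0 < SOf k P v := SOf_min_pos P hk hKD hmin
      rw [leader_of_pos hpos, hmin]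
    · set j : Fin (k*n) := minF P x with hjdef
      have hjlex : (j : ℕ) ≤ v := minF_le P x
      have hjlt : (j : ℕ) < v := by
        rcases Nat.lt_or_ge (j : ℕ) v with h|h
        · exact h
        · exact absurd (Fin.ext (show (j:ℕ) = (x:ℕ) by omega)) hmin
      have hSv : ¬ 0 < SOf k P v := by
        have h0 : SOf k P v = 0 := SOf_of_not_min P hmin
        omega
      rw [leader_eq, if_neg hSv]
      have hminj : minF P j = j := minF_idem P x
      have hkS : k * SOf k P (j:ℕ) = (P.part x).card := by
        rw [k_mul_SOf P hk hKD hminj, part_minF]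
      have hknpos : 0 < k*n := by omega
      apply Nat.findGreatest_eq_iff.mpr
      refine ⟨by omega, fun _ => ?_, ?_⟩
      · -- the predicate holds at j
        rw [fillc_eq_card_filter, hkS]
        have hle : ((Finset.range v).filter
            (fun t => leader k (SOf k P) t = (j:ℕ))).card ≤ ((P.part x).erase x).card := by
          apply Finset.card_le_card_of_injOn
            (fun t => (⟨t % (k*n), Nat.mod_lt _ hknpos⟩ : Fin (k*n)))
          · intro t ht
            rw [Finset.mem_coe, Finset.mem_filter, Finset.mem_range] at ht
            obtain ⟨htv, htl⟩ := ht
            have htkn : t < k*n := by omega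
            have hmod : t % (k*n) = t := Nat.mod_eq_of_lt htkn
            have hIH := IH t htv htkn
            have hmF : minF P ⟨t, htkn⟩ = j := Fin.ext (by omega)
            rw [Finset.mem_coe, Finset.mem_erase]
            constructor
            · intro hcx
              have : t = v := by
                have := congrArg Fin.val hcx
                simpa [hmod] using this
              omega
            · have hmem : (⟨t, htkn⟩ : Fin (k*n)) ∈ P.part j :=
                (mem_part_iff_minF P).mpr (by rw [hmF, hminj])
              rw [hjdef, part_minF] at hmem
              have : (⟨t % (k*n), Nat.mod_lt _ hknpos⟩ : Fin (k*n)) = ⟨t, htkn⟩ :=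
                Fin.ext (by simpa using hmod)
              beta_reduce
              rw [this]
              exact hmem
          · intro t ht t' ht' heq
            rw [Finset.coe_filter] at ht ht'
            have h1 : t < v := Finset.mem_range.mp (by
              simp only [Set.mem_setOf_eq] at ht; exact ht.1)
            have h2 : t' < v := Finset.mem_range.mp (by
              simp only [Set.mem_setOf_eq] at ht'; exact ht'.1)
            have := congrArg Fin.val heq
            simpa [Nat.mod_eq_of_lt (by omega : t < k*n),
              Nat.mod_eq_of_lt (by omega : t' < k*n)] using this
        have hxmem : x ∈ P.part x := P.mem_part (Finset.mem_univ x)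
        have hcpos : 0 < (P.part x).card := Finset.card_pos.mpr ⟨x, hxmem⟩
        have := Finset.card_erase_of_mem hxmem
        omega
      · -- no larger witness
        intro w hjw hwv hcon
        have hwkn : w < k*n := by omega
        set y : Fin (k*n) := ⟨w, hwkn⟩ with hydef
        have hSw_pos : 0 < SOf k P w := by
          by_contra hc
          have : SOf k P w = 0 := by omega
          rw [this, Nat.mul_zero] at hcon
          omega
        have hminy : minF P y = y := by
          by_contra hc
          have h0 : SOf k P w = 0 := SOf_of_not_min P hc
          omega
        have hwv' : w < v := by
          rcases Nat.lt_or_ge w v with h|h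
          · exact h
          · exfalso
            have hyx : y = x := Fin.ext (show w = v by omega)
            rw [hyx] at hminy
            exact hmin hminy
        have hkSy : k * SOf k P w = (P.part y).card := k_mul_SOf P hk hKD hminy
        rw [fillc_eq_card_filter, hkSy] at hcon
        -- there is an element of `part y` beyond `v`
        have hex : ∃ e ∈ P.part y, ¬ (e : ℕ) < v := by
          by_contra hc
          push_neg at hc
          have hle : (P.part y).card ≤ ((Finset.range v).filter
              (fun t => leader k (SOf k P) t = w)).card := by
            apply Finset.card_le_card_of_injOn (fun e : Fin (k*n) => (e : ℕ))
            · intro e he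
              rw [Finset.mem_coe, Finset.mem_filter, Finset.mem_range]
              have hev := hc e he
              refine ⟨hev, ?_⟩
              have hIH := IH (e : ℕ) hev e.isLt
              have hmFe : minF P e = y := by
                have := (mem_part_iff_minF P).mp he
                rw [this, hminy]
              have : (⟨(e:ℕ), e.isLt⟩ : Fin (k*n)) = e := Fin.ext rfl
              rw [this] at hIH
              rw [hIH, hmFe]
            · intro e _ e' _ h
              exact Fin.ext h
          omega
        obtain ⟨e, hey, hev⟩ := hex
        have hex2 : v < (e : ℕ) := by
          rcases Nat.lt_or_ge v (e : ℕ) with h|h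
          · exact h
          · exfalso
            have hexx : e = x := Fin.ext (show (e:ℕ) = v by omega)
            rw [hexx] at hey
            have hmm := (mem_part_iff_minF P).mp hey
            have h3 : minF P x = y := by rw [hmm, hminy]
            have h4 : (j : ℕ) = w := congrArg Fin.val h3
            omega
        -- crossing argument
        have hrel1 : pRel P j x := by
          rw [pRel_iff_minF]
          rw [hjdef, minF_idem]
        have hrel2 : pRel P y e := by
          rw [pRel_iff_minF]
          exact ((mem_part_iff_minF P).mp hey).symm
        have := hNC j y x e (by exact hjw) (by exact hwv') (by exact hex2) hrel1 hrel2
        rw [pRel_iff_minF, hminj, hminy] at this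
        have : (j : ℕ) = w := congrArg Fin.val this
        omega

end RoundTrip

section RoundTrip2

variable {k n : ℕ} (P : NCP (k*n))

lemma part_partnOf_SOf (hk : 0 < k) (hNC : IsNonCrossing P) (hKD : IsKDivisible k P)
    (x : Fin (k*n)) : (partnOf k n (SOf k P)).part x = P.part x := by
  have hl : ∀ z : Fin (k*n), leaderFin k n (SOf k P) z = minF P z := by
    intro z
    apply Fin.ext
    have h := leader_SOf P hk hNC hKD z.val z.isLt
    have hz : (⟨z.val, z.isLt⟩ : Fin (k*n)) = z := Fin.ext rfl
    rw [hz] at h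
    exact h
  rw [part_partnOf]
  ext y
  rw [Finset.mem_filter, hl, hl]
  constructor
  · intro h
    exact (mem_part_iff_minF P).mpr h.2.symm
  · intro h
    exact ⟨Finset.mem_univ _, ((mem_part_iff_minF P).mp h).symm⟩

lemma partnOf_SOf_eq (hk : 0 < k) (hNC : IsNonCrossing P) (hKD : IsKDivisible k P) :
    partnOf k n (SOf k P) = P := by
  have hpart := part_partnOf_SOf P hk hNC hKD
  apply Finpartition.ext
  ext t
  constructor
  · intro ht
    obtain ⟨x, hx, hrep⟩ := exists_part_rep _ ht
    rw [← hrep, hpart]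
    exact P.part_mem.2 (Finset.mem_univ x)
  · intro ht
    obtain ⟨x, hx, hrep⟩ := exists_part_rep _ ht
    rw [← hrep, ← hpart]
    exact (partnOf k n (SOf k P)).part_mem.2 (Finset.mem_univ x)

end RoundTrip2

section RoundTrip1

variable {k n : ℕ} {S : ℕ → ℕ}

lemma minF_partnOf (hk : 0 < k)
    (hH2 : ∀ i, i < k*n → i + 1 ≤ k * ∑ j ∈ Finset.range (i+1), S j)
    (x : Fin (k*n)) : minF (partnOf k n S) x = leaderFin k n S x := by
  apply le_antisymm
  · apply Finset.min'_le
    rw [part_partnOf, Finset.mem_filter]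
    refine ⟨Finset.mem_univ _, ?_⟩
    apply Fin.ext
    exact (leader_idem hk hH2 x.isLt).symm
  · apply Finset.le_min'
    intro y hy
    rw [part_partnOf, Finset.mem_filter] at hy
    have h1 : leaderFin k n S y ≤ y := leader_le y.val
    rw [← hy.2] at h1
    exact h1

lemma SOf_partnOf (hk : 0 < k)
    (hS0 : ∀ j, k*n ≤ j → S j = 0)
    (hsum : ∑ j ∈ Finset.range (k*n), S j = n)
    (hH2 : ∀ i, i < k*n → i + 1 ≤ k * ∑ j ∈ Finset.range (i+1), S j) :
    SOf k (partnOf k n S) = S := by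
  funext i
  by_cases hiN : i < k*n
  · set x : Fin (k*n) := ⟨i, hiN⟩ with hxdef
    have hminx : minF (partnOf k n S) x = leaderFin k n S x := minF_partnOf hk hH2 x
    by_cases hS : 0 < S i
    · have hfix : leaderFin k n S x = x := Fin.ext (leader_of_pos hS)
      have hmin : minF (partnOf k n S) x = x := hminx.trans hfix
      have h1 : SOf k (partnOf k n S) i = ((partnOf k n S).part x).card / k :=
        SOf_of_min _ hmin
      rw [h1, card_part_partnOf, fillc_final hk rfl hS0 hsum hH2,
        show leader k S x.val = x.val from leader_of_pos hS]
      exact Nat.mul_div_cancel_left _ hk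
    · have hS0i : S i = 0 := by omega
      have hne : minF (partnOf k n S) x ≠ x := by
        rw [hminx]
        intro hc
        have hc' : leader k S i = i := congrArg Fin.val hc
        have := leader_S_pos hk hH2 hiN
        rw [hc'] at this
        omega
      rw [SOf_of_not_min _ hne, hS0i]
  · rw [SOf_of_ge _ (by omega), hS0 i (by omega)]

end RoundTrip1

section Glue

variable {k n : ℕ}

/-- restriction of a tuple to a sequence on `[0, k*n)` -/
def SgOf (k n : ℕ) (g : Fin (k*n+1) → ℕ) : ℕ → ℕ :=
  fun i => if h : i < k*n then g ⟨i, by omega⟩ else 0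

lemma SgOf_S0 (g : Fin (k*n+1) → ℕ) : ∀ j, k*n ≤ j → SgOf k n g j = 0 :=
  fun j hj => dif_neg (by omega)

lemma ccg_eq_sum_SgOf (g : Fin (k*n+1) → ℕ) {t : ℕ} (ht : t ≤ k*n) :
    ccg k n g t = ∑ j ∈ Finset.range t, SgOf k n g j := by
  apply Finset.sum_congr rfl
  intro j hj
  have hjt : j < t := Finset.mem_range.mp hj
  unfold extg SgOf
  rw [dif_pos (by omega : j < k*n)]
  congr 1
  exact Fin.ext (Nat.mod_eq_of_lt (by omega))

lemma extg_last (g : Fin (k*n+1) → ℕ) : extg k n g (k*n) = g (Fin.last (k*n)) := by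
  unfold extg
  congr 1
  apply Fin.ext
  rw [Fin.val_last]
  exact Nat.mod_eq_of_lt (by omega)

lemma glast_zero (hk : 0 < k) (hn : 0 < n) (g : Fin (k*n+1) → ℕ)
    (hg : ∑ i, g i = n) (hgood : Goodg k n g) : g (Fin.last (k*n)) = 0 := by
  have h1 : k*n ≤ k * ccg k n g (k*n) :=
    hgood (k*n) (Nat.mul_pos hk hn) le_rfl
  have h2 : ccg k n g (k*n+1) = n := ccg_full g hg
  have h3 : ccg k n g (k*n+1) = ccg k n g (k*n) + extg k n g (k*n) := ccg_succ g (k*n)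
  rw [extg_last] at h3
  have h5 : k * (ccg k n g (k*n) + g (Fin.last (k*n))) = k * n := by
    rw [← h3, h2]
  rw [Nat.mul_add] at h5
  have h6 : k * g (Fin.last (k*n)) = 0 := by omega
  rcases Nat.mul_eq_zero.mp h6 with h|h
  · omega
  · exact h

lemma sum_SgOf (hk : 0 < k) (hn : 0 < n) (g : Fin (k*n+1) → ℕ)
    (hg : ∑ i, g i = n) (hgood : Goodg k n g) :
    ∑ j ∈ Finset.range (k*n), SgOf k n g j = n := by
  rw [← ccg_eq_sum_SgOf g le_rfl]
  have h2 : ccg k n g (k*n+1) = n := ccg_full g hg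
  have h3 : ccg k n g (k*n+1) = ccg k n g (k*n) + extg k n g (k*n) := ccg_succ g (k*n)
  rw [extg_last, glast_zero hk hn g hg hgood] at h3
  omega

lemma H2_SgOf (g : Fin (k*n+1) → ℕ) (hgood : Goodg k n g) :
    ∀ i, i < k*n → i + 1 ≤ k * ∑ j ∈ Finset.range (i+1), SgOf k n g j := by
  intro i hi
  rw [← ccg_eq_sum_SgOf g (by omega)]
  exact hgood (i+1) (by omega) (by omega)

/-- tuple from a partition -/
noncomputable def gOfP (k n : ℕ) (P : NCP (k*n)) : Fin (k*n+1) → ℕ :=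
  fun i => SOf k P i.val

lemma sum_gOfP (hk : 0 < k) (P : NCP (k*n)) (hKD : IsKDivisible k P) :
    ∑ i, gOfP k n P i = n := by
  show ∑ i : Fin (k*n+1), SOf k P i.val = n
  rw [Fin.sum_univ_eq_sum_range (fun i => SOf k P i) (k*n+1)]
  rw [Finset.sum_range_succ, SOf_of_ge P le_rfl, Nat.add_zero]
  have htot := k_mul_sum_SOf_total P hk hKD
  exact Nat.eq_of_mul_eq_mul_left hk (by rw [htot])

lemma good_gOfP (hk : 0 < k) (P : NCP (k*n)) (hKD : IsKDivisible k P) :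
    Goodg k n (gOfP k n P) := by
  intro j hj hjle
  have hceq : ccg k n (gOfP k n P) j = ∑ t ∈ Finset.range j, SOf k P t := by
    apply Finset.sum_congr rfl
    intro t ht
    have htj : t < j := Finset.mem_range.mp ht
    show SOf k P ((⟨t % (k*n+1), _⟩ : Fin (k*n+1)) : ℕ) = SOf k P t
    congr 1
    exact Nat.mod_eq_of_lt (by omega)
  have hb := prefix_bound_SOf P hk hKD (show j-1 < k*n by omega)
  have hj1 : j - 1 + 1 = j := by omega
  rw [hj1] at hb
  rw [hceq]
  exact hb

end Glue

end KDivNC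

open KDivNC

theorem stmt1_aux (k n : ℕ) (hk : 0 < k) (hn : 0 < n) :
    Nat.card {P : NCP (k * n) // IsNonCrossing P ∧ IsKDivisible k P} =
      ((k + 1) * n).choose n / (k * n + 1) := by
  classical
  have hequiv : {P : NCP (k * n) // IsNonCrossing P ∧ IsKDivisible k P} ≃ GoodT k n :=
    { toFun := fun P => ⟨gOfP k n P.val,
        sum_gOfP hk P.val P.prop.2,
        good_gOfP hk P.val P.prop.2⟩
      invFun := fun g => ⟨partnOf k n (SgOf k n g.val),
        partnOf_NC hk (H2_SgOf g.val g.prop.2),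
        partnOf_kdiv hk (SgOf_S0 g.val)
          (sum_SgOf hk hn g.val g.prop.1 g.prop.2) (H2_SgOf g.val g.prop.2)⟩
      left_inv := fun P => Subtype.ext (by
        have h1 : SgOf k n (gOfP k n P.val) = SOf k P.val := by
          funext i
          unfold SgOf gOfP
          by_cases h : i < k*n
          · rw [dif_pos h]
          · rw [dif_neg h, SOf_of_ge _ (by omega)]
        show partnOf k n (SgOf k n (gOfP k n P.val)) = P.val
        rw [h1, partnOf_SOf_eq P.val hk P.prop.1 P.prop.2])
      right_inv := fun g => Subtype.ext (by
        funext i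
        show SOf k (partnOf k n (SgOf k n g.val)) i.val = g.val i
        rw [SOf_partnOf hk (SgOf_S0 g.val)
          (sum_SgOf hk hn g.val g.prop.1 g.prop.2) (H2_SgOf g.val g.prop.2)]
        unfold SgOf
        by_cases h : i.val < k*n
        · rw [dif_pos h]
        · rw [dif_neg h]
          have hlast : i = Fin.last (k*n) := Fin.ext (by
            have := i.isLt
            simp only [Fin.val_last]
            omega)
          rw [hlast]
          exact (glast_zero hk hn g.val g.prop.1 g.prop.2).symm) }
  rw [Nat.card_congr hequiv, card_GoodT]


/-- The number of `k`-divisible non-crossing partitions of `{1,…,kn}` is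
`binom((k+1)n, n) / (kn + 1)`. -/
theorem stmt1 (k n : ℕ) (hk : 0 < k) (hn : 0 < n) :
    Nat.card {P : NCP (k * n) // IsNonCrossing P ∧ IsKDivisible k P} =
      ((k + 1) * n).choose n / (k * n + 1) := stmt1_aux k n hk hn
end

section
/- For every non-crossing partition pi of {1,...,n}, the number of blocks of pi plus the number of blocks of its Kreweras complement Kr(pi) equals n + 1. -/
open scoped BigOperators Classical

-- ## Auxiliary development

namespace KrAux

variable {n : ℕ}

lemma pRel_symm {P : NCP n} {x y : Fin n} (h : pRel P x y) : pRel P y x := by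
  obtain ⟨t, ht, hx, hy⟩ := h; exact ⟨t, ht, hy, hx⟩

lemma pRel_part {P : NCP n} {x y : Fin n} : pRel P x y ↔ y ∈ P.part x := by
  constructor
  · rintro ⟨t, ht, hx, hy⟩
    rwa [P.part_eq_of_mem ht hx]
  · intro h
    exact ⟨P.part x, P.part_mem.mpr (Finset.mem_univ x), P.mem_part (Finset.mem_univ x), h⟩

lemma pRel_ofSetoid {s : Setoid (Fin n)} {x y : Fin n} :
    pRel (Finpartition.ofSetoid s) x y ↔ s.r x y := by
  rw [pRel_part, Finpartition.mem_part_ofSetoid_iff_rel]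

/-- even point -/
def ev (p : Fin n) : Fin (2 * n) := ⟨2 * p, by have := p.isLt; omega⟩
/-- odd point -/
def od (p : Fin n) : Fin (2 * n) := ⟨2 * p + 1, by have := p.isLt; omega⟩

lemma jointRel_ev {P Q : NCP n} {p q : Fin n} (h : pRel P p q) : jointRel P Q (ev p) (ev q) := by
  left
  refine ⟨by simp [ev, Nat.mul_mod_right], by simp [ev, Nat.mul_mod_right], ?_⟩
  simp only [show ((ev p : Fin (2*n)) : ℕ) / 2 = (p : ℕ) from by simp [ev],
    show ((ev q : Fin (2*n)) : ℕ) / 2 = (q : ℕ) from by simp [ev], Fin.eta]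
  exact h

lemma jointRel_od {P Q : NCP n} {p q : Fin n} (h : pRel Q p q) : jointRel P Q (od p) (od q) := by
  right
  refine ⟨by simp [od, Nat.mul_add_mod], by simp [od, Nat.mul_add_mod], ?_⟩
  simp only [show ((od p : Fin (2*n)) : ℕ) / 2 = (p : ℕ) from by simp [od]; omega,
    show ((od q : Fin (2*n)) : ℕ) / 2 = (q : ℕ) from by simp [od]; omega, Fin.eta]
  exact h

lemma not_jointRel_mixed {P Q : NCP n} {p q : Fin n} : ¬ jointRel P Q (ev p) (od q) := by
  rintro (⟨h1, h2, -⟩ | ⟨h1, h2, -⟩) <;> simp [ev, od, Nat.mul_mod_right, Nat.mul_add_mod] at h1 h2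

lemma not_jointRel_mixed' {P Q : NCP n} {p q : Fin n} : ¬ jointRel P Q (od p) (ev q) := by
  rintro (⟨h1, h2, -⟩ | ⟨h1, h2, -⟩) <;> simp [ev, od, Nat.mul_mod_right, Nat.mul_add_mod] at h1 h2

/-- The arcs of `P`: pairs of consecutive elements of a block. -/
def Arcs (P : NCP n) : Finset (Fin n × Fin n) :=
  Finset.univ.filter (fun a => a.1 < a.2 ∧ ∃ t ∈ P.parts, a.1 ∈ t ∧ a.2 ∈ t ∧
    ∀ z ∈ t, ¬((a.1 : ℕ) < (z : ℕ) ∧ (z : ℕ) < (a.2 : ℕ)))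

lemma mem_Arcs {P : NCP n} {a : Fin n × Fin n} :
    a ∈ Arcs P ↔ a.1 < a.2 ∧ ∃ t ∈ P.parts, a.1 ∈ t ∧ a.2 ∈ t ∧
      ∀ z ∈ t, ¬((a.1 : ℕ) < (z : ℕ) ∧ (z : ℕ) < (a.2 : ℕ)) := by
  simp [Arcs]

/-- The set of arcs covering gap `g` (the gap between `g` and `g+1`). -/
def Agap (P : NCP n) (g : Fin n) : Finset (Fin n × Fin n) :=
  (Arcs P).filter (fun a => (a.1 : ℕ) ≤ (g : ℕ) ∧ (g : ℕ) < (a.2 : ℕ))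

lemma mem_Agap {P : NCP n} {g : Fin n} {a : Fin n × Fin n} :
    a ∈ Agap P g ↔ a ∈ Arcs P ∧ (a.1 : ℕ) ≤ (g : ℕ) ∧ (g : ℕ) < (a.2 : ℕ) := by
  simp [Agap]

lemma arc_left_inj {P : NCP n} {a b : Fin n × Fin n} (ha : a ∈ Arcs P) (hb : b ∈ Arcs P)
    (h : a.1 = b.1) : a = b := by
  obtain ⟨hlt, t, ht, h1, h2, hgap⟩ := mem_Arcs.mp ha
  obtain ⟨hlt', t', ht', h1', h2', hgap'⟩ := mem_Arcs.mp hb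
  have htt : t = t' := P.eq_of_mem_parts ht ht' h1 (h ▸ h1')
  subst htt
  have g1 := hgap' a.2 h2
  have g2 := hgap b.2 h2'
  have h' : (a.1 : ℕ) = (b.1 : ℕ) := by rw [h]
  rw [Fin.lt_def] at hlt hlt'
  have h22 : (a.2 : ℕ) = (b.2 : ℕ) := by omega
  exact Prod.ext h (Fin.ext h22)

/-- if a block straddles gap `g` then some arc of that block covers gap `g`,
with endpoints between the straddling witnesses. -/
lemma arc_of_straddle {P : NCP n} {t : Finset (Fin n)} (ht : t ∈ P.parts) {x y : Fin n}
    (hx : x ∈ t) (hy : y ∈ t) {g : ℕ} (hxg : (x : ℕ) ≤ g) (hgy : g < (y : ℕ)) :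
    ∃ a ∈ Arcs P, (x : ℕ) ≤ (a.1 : ℕ) ∧ (a.1 : ℕ) ≤ g ∧ g < (a.2 : ℕ) ∧ (a.2 : ℕ) ≤ (y : ℕ) := by
  classical
  obtain ⟨p, hpmem, hpmax⟩ := Finset.exists_max_image (t.filter (fun z : Fin n => (z : ℕ) ≤ g))
    (fun z => (z : ℕ)) ⟨x, by simp [hx, hxg]⟩
  obtain ⟨q, hqmem, hqmin⟩ := Finset.exists_min_image (t.filter (fun z : Fin n => g < (z : ℕ)))
    (fun z => (z : ℕ)) ⟨y, by simp [hy, hgy]⟩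
  obtain ⟨hpt, hpg⟩ := Finset.mem_filter.mp hpmem
  obtain ⟨hqt, hgq⟩ := Finset.mem_filter.mp hqmem
  have hpq : p < q := Fin.lt_def.mpr (by omega)
  refine ⟨(p, q), mem_Arcs.mpr ⟨hpq, t, ht, hpt, hqt, ?_⟩,
    hpmax x (by simp [hx, hxg]), hpg, hgq, hqmin y (by simp [hy, hgy])⟩
  intro z hz hcon
  rcases le_or_gt (z : ℕ) g with hzg | hzg
  · have := hpmax z (by simp [hz, hzg])
    simp only at this hcon
    omega
  · have := hqmin z (by simp [hz, hzg])
    simp only at this hcon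
    omega


lemma valid_cov {P Q' : NCP n} (hR : RelNonCrossing (jointRel P Q')) {i j : Fin n}
    (hij : pRel Q' i j) {b : Fin n × Fin n} (hb : b ∈ Arcs P)
    (h1 : (b.1 : ℕ) ≤ (i : ℕ)) (h2 : (i : ℕ) < (b.2 : ℕ)) :
    (b.1 : ℕ) ≤ (j : ℕ) ∧ (j : ℕ) < (b.2 : ℕ) := by
  obtain ⟨hlt, t, ht, hm1, hm2, hgap⟩ := mem_Arcs.mp hb
  have hPb : pRel P b.1 b.2 := ⟨t, ht, hm1, hm2⟩
  rw [Fin.lt_def] at hlt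
  by_contra hcj
  rcases (by omega : (j : ℕ) < (b.1 : ℕ) ∨ (b.2 : ℕ) ≤ (j : ℕ)) with hcase | hcase
  · exact not_jointRel_mixed' (hR (od j) (ev b.1) (od i) (ev b.2)
      (by simp [ev, od, Fin.lt_def]; omega) (by simp [ev, od, Fin.lt_def]; omega)
      (by simp [ev, od, Fin.lt_def]; omega) (jointRel_od (pRel_symm hij)) (jointRel_ev hPb))
  · exact not_jointRel_mixed (hR (ev b.1) (od i) (ev b.2) (od j)
      (by simp [ev, od, Fin.lt_def]; omega) (by simp [ev, od, Fin.lt_def]; omega)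
      (by simp [ev, od, Fin.lt_def]; omega) (jointRel_ev hPb) (jointRel_od hij))

lemma Agap_eq_iff {P : NCP n} {g g' : Fin n} : Agap P g = Agap P g' ↔
    ∀ a ∈ Arcs P, (((a.1 : ℕ) ≤ (g : ℕ) ∧ (g : ℕ) < (a.2 : ℕ)) ↔
      ((a.1 : ℕ) ≤ (g' : ℕ) ∧ (g' : ℕ) < (a.2 : ℕ))) := by
  constructor
  · intro h a ha
    constructor <;> intro hc
    · have h' : a ∈ Agap P g := mem_Agap.mpr ⟨ha, hc⟩
      rw [h] at h'; exact (mem_Agap.mp h').2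
    · have h' : a ∈ Agap P g' := mem_Agap.mpr ⟨ha, hc⟩
      rw [← h] at h'; exact (mem_Agap.mp h').2
  · intro h
    ext a
    simp only [mem_Agap]
    by_cases ha : a ∈ Arcs P
    · have := h a ha
      simp only [ha, true_and]
      exact this
    · simp [ha]

/-- The Kreweras setoid: two gaps are equivalent iff covered by the same arcs. -/
def KrS (P : NCP n) : Setoid (Fin n) :=
  ⟨fun x y => Agap P x = Agap P y, ⟨fun _ => rfl, Eq.symm, Eq.trans⟩⟩

lemma pRel_Kr0 {P : NCP n} {x y : Fin n} :
    pRel (Finpartition.ofSetoid (KrS P)) x y ↔ Agap P x = Agap P y :=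
  pRel_ofSetoid

lemma valid_Kr0 {P : NCP n} (hP : IsNonCrossing P) :
    RelNonCrossing (jointRel P (Finpartition.ofSetoid (KrS P))) := by
  intro a b c d hab hbc hcd hac hbd
  rw [Fin.lt_def] at hab hbc hcd
  rcases hac with ⟨pa, pc, hPac⟩ | ⟨pa, pc, hQac⟩ <;>
    rcases hbd with ⟨pb, pd, hPbd⟩ | ⟨pb, pd, hQbd⟩
  · -- both P-pairs
    left
    exact ⟨pa, pb, hP _ _ _ _ (Fin.mk_lt_mk.mpr (by omega)) (Fin.mk_lt_mk.mpr (by omega))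
      (Fin.mk_lt_mk.mpr (by omega)) hPac hPbd⟩
  · -- P-pair (a,c), Q-pair (b,d)
    exfalso
    obtain ⟨t, ht, hx, hy⟩ := hPac
    obtain ⟨a', ha', hb1, hb2, hb3, hb4⟩ := arc_of_straddle ht hx hy
      (g := (b : ℕ) / 2) (by simp only [Fin.val_mk]; omega) (by simp only [Fin.val_mk]; omega)
    have := Agap_eq_iff.mp (pRel_Kr0.mp hQbd) a' ha'
    simp only [Fin.val_mk] at this hb1 hb2 hb3 hb4
    omega
  · -- Q-pair (a,c), P-pair (b,d)
    exfalso
    obtain ⟨t, ht, hx, hy⟩ := hPbd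
    obtain ⟨a', ha', hb1, hb2, hb3, hb4⟩ := arc_of_straddle ht hx hy
      (g := (c : ℕ) / 2) (by simp only [Fin.val_mk]; omega) (by simp only [Fin.val_mk]; omega)
    have := Agap_eq_iff.mp (pRel_Kr0.mp hQac) a' ha'
    simp only [Fin.val_mk] at this hb1 hb2 hb3 hb4
    omega
  · -- both Q-pairs
    right
    refine ⟨pa, pb, pRel_Kr0.mpr (Agap_eq_iff.mpr fun bb hbb => ?_)⟩
    have e1 := Agap_eq_iff.mp (pRel_Kr0.mp hQac) bb hbb
    have e2 := Agap_eq_iff.mp (pRel_Kr0.mp hQbd) bb hbb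
    simp only [Fin.val_mk] at e1 e2 ⊢
    omega

lemma pRel_Q_iff {P Q : NCP n} (hP : IsNonCrossing P) (hQ : IsKr P Q) {x y : Fin n} :
    pRel Q x y ↔ Agap P x = Agap P y := by
  constructor
  · intro h
    exact Agap_eq_iff.mpr fun b hb =>
      ⟨fun hc => valid_cov hQ.1 h hb hc.1 hc.2,
       fun hc => valid_cov hQ.1 (pRel_symm h) hb hc.1 hc.2⟩
  · intro h
    obtain ⟨t, ht, hx, hy⟩ := pRel_Kr0.mpr h
    obtain ⟨u, hu, htu⟩ := hQ.2 _ (valid_Kr0 hP) ht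
    exact ⟨u, hu, htu hx, htu hy⟩

lemma Agap_last {P : NCP n} (hn : 0 < n) : Agap P ⟨n - 1, by omega⟩ = ∅ := by
  ext a
  simp only [Finset.notMem_empty, iff_false, mem_Agap, Fin.val_mk]
  rintro ⟨-, -, h⟩
  have := a.2.isLt
  omega

lemma self_mem_Agap {P : NCP n} {a : Fin n × Fin n} (ha : a ∈ Arcs P) : a ∈ Agap P a.1 :=
  mem_Agap.mpr ⟨ha, le_refl _, Fin.lt_def.mp (mem_Arcs.mp ha).1⟩

lemma arc_left_inj' {P : NCP n} {a b : Fin n × Fin n} (ha : a ∈ Arcs P) (hb : b ∈ Arcs P)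
    (h : Agap P a.1 = Agap P b.1) : a = b := by
  have h1 := (mem_Agap.mp (h ▸ self_mem_Agap ha)).2.1
  have h2 := (mem_Agap.mp (h ▸ self_mem_Agap hb : b ∈ Agap P a.1)).2.1
  exact arc_left_inj ha hb (Fin.ext (by omega))

lemma image_Agap {P : NCP n} (hP : IsNonCrossing P) (hn : 0 < n) :
    Finset.univ.image (Agap P) = insert ∅ ((Arcs P).image fun a => Agap P a.1) := by
  ext v
  simp only [Finset.mem_image, Finset.mem_insert, Finset.mem_univ, true_and]
  constructor
  · rintro ⟨g, rfl⟩
    by_cases hg : Agap P g = ∅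
    · exact Or.inl hg
    right
    obtain ⟨a, ha, hamax⟩ := Finset.exists_max_image (Agap P g) (fun a => (a.1 : ℕ))
      (Finset.nonempty_of_ne_empty hg)
    obtain ⟨haarc, ha1, ha2⟩ := mem_Agap.mp ha
    refine ⟨a, haarc, Agap_eq_iff.mpr fun b hb => ?_⟩
    constructor
    · rintro ⟨hb1, hb2⟩
      refine ⟨by omega, ?_⟩
      by_contra hbg
      push_neg at hbg
      -- b.1 ≤ a.1 < b.2 ≤ g < a.2
      obtain ⟨blta, ta, hta, hta1, hta2, hgapa⟩ := mem_Arcs.mp haarc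
      obtain ⟨bltb, tb, htb, htb1, htb2, hgapb⟩ := mem_Arcs.mp hb
      rw [Fin.lt_def] at blta bltb
      rcases eq_or_lt_of_le (hb1 : (b.1 : ℕ) ≤ (a.1 : ℕ)) with heq | hlt'
      · have hba : b = a := arc_left_inj hb haarc (Fin.ext heq)
        rw [hba] at hbg
        omega
      · -- b.1 < a.1 < b.2 < a.2 : crossing
        have hcross := hP b.1 a.1 b.2 a.2 (Fin.lt_def.mpr hlt') (Fin.lt_def.mpr (by omega))
          (Fin.lt_def.mpr (by omega)) ⟨tb, htb, htb1, htb2⟩ ⟨ta, hta, hta1, hta2⟩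
        obtain ⟨u, hu, hub, hua⟩ := hcross
        have e1 : tb = u := P.eq_of_mem_parts htb hu htb1 hub
        have e2 : ta = u := P.eq_of_mem_parts hta hu hta1 hua
        exact hgapa b.2 (by rw [e2, ← e1]; exact htb2) ⟨by omega, by omega⟩
    · rintro ⟨hb1, hb2⟩
      have : b ∈ Agap P g := mem_Agap.mpr ⟨hb, hb1, hb2⟩
      have := hamax b this
      exact ⟨by omega, by omega⟩
  · rintro (rfl | ⟨a, ha, rfl⟩)
    · exact ⟨⟨n - 1, by omega⟩, Agap_last hn⟩
    · exact ⟨a.1, rfl⟩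

lemma card_image_Agap {P : NCP n} (hP : IsNonCrossing P) (hn : 0 < n) :
    (Finset.univ.image (Agap P)).card = (Arcs P).card + 1 := by
  rw [image_Agap hP hn, Finset.card_insert_of_notMem, Finset.card_image_of_injOn, add_comm]
  · intro a ha b hb h
    exact arc_left_inj' (by simpa using ha) (by simpa using hb) h
  · intro hmem
    obtain ⟨a, ha, hcon⟩ := Finset.mem_image.mp hmem
    exact Finset.notMem_empty a (hcon ▸ self_mem_Agap ha)

lemma card_parts_Q {P Q : NCP n} (hP : IsNonCrossing P) (hQ : IsKr P Q) :
    Q.parts.card = (Finset.univ.image (Agap P)).card := by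
  refine Finset.card_bij (fun t ht => Agap P (Q.nonempty_of_mem_parts ht).choose) ?_ ?_ ?_
  · intro t ht
    exact Finset.mem_image.mpr ⟨_, Finset.mem_univ _, rfl⟩
  · intro t₁ ht₁ t₂ ht₂ heq
    have hx₁ := (Q.nonempty_of_mem_parts ht₁).choose_spec
    have hx₂ := (Q.nonempty_of_mem_parts ht₂).choose_spec
    obtain ⟨u, hu, h1, h2⟩ := (pRel_Q_iff hP hQ).mpr heq
    rw [Q.eq_of_mem_parts ht₁ hu hx₁ h1, Q.eq_of_mem_parts ht₂ hu hx₂ h2]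
  · intro v hv
    obtain ⟨g, -, rfl⟩ := Finset.mem_image.mp hv
    have ht : Q.part g ∈ Q.parts := Q.part_mem.mpr (Finset.mem_univ g)
    refine ⟨Q.part g, ht, ?_⟩
    have hrel : pRel Q g (Q.nonempty_of_mem_parts ht).choose :=
      ⟨Q.part g, ht, Q.mem_part (Finset.mem_univ g), (Q.nonempty_of_mem_parts ht).choose_spec⟩
    exact ((pRel_Q_iff hP hQ).mp hrel).symm

lemma card_parts_arcs {P : NCP n} : P.parts.card + (Arcs P).card = n := by
  classical
  have hsplit : Arcs P = P.parts.biUnion (fun t => (Arcs P).filter fun a => a.1 ∈ t) := by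
    ext a
    simp only [Finset.mem_biUnion, Finset.mem_filter]
    constructor
    · intro ha
      obtain ⟨-, t, ht, h1, -, -⟩ := mem_Arcs.mp ha
      exact ⟨t, ht, ha, h1⟩
    · rintro ⟨t, -, ha, -⟩
      exact ha
  have hdisj : ∀ x ∈ P.parts, ∀ y ∈ P.parts, x ≠ y →
      Disjoint ((Arcs P).filter fun a => a.1 ∈ x) ((Arcs P).filter fun a => a.1 ∈ y) := by
    intro x hx y hy hxy
    rw [Finset.disjoint_left]
    intro a ha ha'
    obtain ⟨-, hax⟩ := Finset.mem_filter.mp ha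
    obtain ⟨-, hay⟩ := Finset.mem_filter.mp ha'
    exact hxy (P.eq_of_mem_parts hx hy hax hay)
  have hpercard : ∀ t ∈ P.parts, ((Arcs P).filter fun a => a.1 ∈ t).card + 1 = t.card := by
    intro t ht
    have htne : t.Nonempty := P.nonempty_of_mem_parts ht
    have hbij : ((Arcs P).filter fun a => a.1 ∈ t).card = (t.erase (t.max' htne)).card := by
      refine Finset.card_bij (fun a _ => a.1) ?_ ?_ ?_
      · intro a ha
        obtain ⟨haarc, hat⟩ := Finset.mem_filter.mp ha
        obtain ⟨hlt, t', ht', h1, h2, -⟩ := mem_Arcs.mp haarc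
        have htt : t' = t := P.eq_of_mem_parts ht' ht h1 hat
        subst htt
        refine Finset.mem_erase.mpr ⟨?_, hat⟩
        intro hcon
        have h3 : a.2 ≤ t'.max' htne := Finset.le_max' t' a.2 h2
        have h4 : (a.1 : ℕ) = ((t'.max' htne : Fin n) : ℕ) := congrArg Fin.val hcon
        have h5 : (a.2 : ℕ) ≤ ((t'.max' htne : Fin n) : ℕ) := Fin.le_def.mp h3
        rw [Fin.lt_def] at hlt
        omega
      · intro a ha b hb h
        exact arc_left_inj (Finset.mem_filter.mp ha).1 (Finset.mem_filter.mp hb).1 h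
      · intro x hx
        obtain ⟨hxne, hxt⟩ := Finset.mem_erase.mp hx
        have hxlt : (x : ℕ) < ((t.max' htne : Fin n) : ℕ) := by
          rcases lt_or_eq_of_le (Finset.le_max' t x hxt) with h | h
          · exact Fin.lt_def.mp h
          · exact absurd h hxne
        obtain ⟨a, ha, hb1, hb2, -, -⟩ := arc_of_straddle ht hxt (t.max'_mem htne)
          (g := (x : ℕ)) (le_refl _) hxlt
        have ha1 : a.1 = x := Fin.ext (by omega)
        exact ⟨a, Finset.mem_filter.mpr ⟨ha, ha1 ▸ hxt⟩, ha1⟩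
    rw [hbij, Finset.card_erase_of_mem (t.max'_mem htne)]
    have := Finset.card_pos.mpr htne
    omega
  have hsum : ∑ t ∈ P.parts, t.card = n := by
    have := P.sum_card_parts
    simpa using this
  have hcard : (Arcs P).card = ∑ t ∈ P.parts, ((Arcs P).filter fun a => a.1 ∈ t).card := by
    conv_lhs => rw [hsplit]
    exact Finset.card_biUnion hdisj
  calc P.parts.card + (Arcs P).card
      = P.parts.card + ∑ t ∈ P.parts, ((Arcs P).filter fun a => a.1 ∈ t).card := by
        rw [hcard]
    _ = ∑ t ∈ P.parts, (((Arcs P).filter fun a => a.1 ∈ t).card + 1) := by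
        rw [Finset.sum_add_distrib, Finset.sum_const, smul_eq_mul, mul_one, add_comm]
    _ = ∑ t ∈ P.parts, t.card := Finset.sum_congr rfl hpercard
    _ = n := hsum

end KrAux

/-- For every non-crossing partition `P` of `{1,…,n}`, the number of blocks of `P` plus the
number of blocks of its Kreweras complement equals `n + 1`. -/
theorem stmt3 (n : ℕ) (hn : 0 < n) (P Q : NCP n) (hP : IsNonCrossing P)
    (hQ : IsKr P Q) : P.parts.card + Q.parts.card = n + 1 := by
  classical
  rw [KrAux.card_parts_Q hP hQ, KrAux.card_image_Agap hP hn]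
  have := KrAux.card_parts_arcs (P := P)
  omega
end

section
/- For each fixed n ≥ 1, the ratio |NC(k,n)_{2,1}| / |NC_k(n)| tends to 1 as k tends to infinity, where |NC_k(n)| = binom(kn,n)/((k-1)n+1) and |NC(k,n)_{2,1}| = k((k-1)n)!/(((k-2)n+2)!(n-1)!). -/
open scoped BigOperators Classical
set_option maxHeartbeats 1000000
open Filter Finset

lemma aux_ratio (c a b : ℝ) (hc : 0 < c) :
    Tendsto (fun k : ℕ => ((k : ℝ) * c + a) / ((k : ℝ) * c + b)) atTop (nhds 1) := by
  have hden : Tendsto (fun k : ℕ => (k : ℝ) * c + b) atTop atTop :=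
    tendsto_atTop_add_const_right atTop b (tendsto_natCast_atTop_atTop.atTop_mul_const hc)
  have h0 : Tendsto (fun k : ℕ => (a - b) / ((k : ℝ) * c + b)) atTop (nhds 0) :=
    tendsto_const_nhds.div_atTop hden
  have h1 : Tendsto (fun k : ℕ => 1 + (a - b) / ((k : ℝ) * c + b)) atTop (nhds 1) := by
    simpa using tendsto_const_nhds.add h0
  refine h1.congr' ?_
  filter_upwards [hden.eventually_gt_atTop 0] with k hk
  field_simp
  ring

lemma g_lim (n : ℕ) (hn : 1 ≤ n) :
    Tendsto (fun k : ℕ => ((k : ℝ) * n / (((k : ℝ) - 1) * n + 2)) *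
      ∏ j ∈ range (n - 2), ((((k : ℝ) - 2) * n + 3 + j) / (((k : ℝ) - 1) * n + 3 + j)))
      atTop (nhds 1) := by
  have hn' : (0 : ℝ) < n := by exact_mod_cast hn
  have h1 : Tendsto (fun k : ℕ => (k : ℝ) * n / (((k : ℝ) - 1) * n + 2)) atTop (nhds 1) := by
    have := aux_ratio n 0 (2 - n) hn'
    refine this.congr fun k => ?_
    ring_nf
  have h2 : Tendsto (fun k : ℕ =>
      ∏ j ∈ range (n - 2), ((((k : ℝ) - 2) * n + 3 + j) / (((k : ℝ) - 1) * n + 3 + j)))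
      atTop (nhds 1) := by
    have := tendsto_finset_prod (f := fun (j : ℕ) (k : ℕ) =>
        (((k : ℝ) - 2) * n + 3 + j) / (((k : ℝ) - 1) * n + 3 + j)) (a := fun _ => 1)
        (range (n - 2)) (fun j _ => by
          have := aux_ratio n (3 + j - 2 * n) (3 + j - n) hn'
          refine this.congr fun k => ?_
          ring_nf)
    simpa using this
  simpa using h1.mul h2

lemma fact_cast_add (m : ℕ) : ∀ p : ℕ,
    (((m + p).factorial : ℕ) : ℝ) = (m.factorial : ℝ) * ∏ j ∈ range p, ((m : ℝ) + j + 1)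
  | 0 => by simp
  | (p + 1) => by
    rw [← add_assoc, Nat.factorial_succ, prod_range_succ, Nat.cast_mul, fact_cast_add m p]
    push_cast
    ring

lemma peel2 (f : ℕ → ℝ) (m : ℕ) :
    ∏ j ∈ range (m + 2), f j = f 0 * f 1 * ∏ j ∈ range m, f (j + 2) := by
  rw [prod_range_succ', prod_range_succ']
  ring

/-- For fixed `n ≥ 1`, `|NC(k,n)_{2,1}| / |NC_k(n)| → 1` as `k → ∞`, where
`|NC_k(n)| = binom(kn,n)/((k-1)n+1)` and `|NC(k,n)_{2,1}| = k((k-1)n)!/(((k-2)n+2)!(n-1)!)`. -/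
theorem stmt7 (n : ℕ) (hn : 1 ≤ n) :
    Filter.Tendsto (fun k : ℕ =>
      (((k : ℝ) * (((k - 1) * n).factorial : ℝ)) /
          (((((k - 2) * n + 2).factorial : ℕ) : ℝ) * ((n - 1).factorial : ℝ))) /
        ((((k * n).choose n : ℕ) : ℝ) / ((((k - 1) * n + 1 : ℕ) : ℝ))))
      Filter.atTop (nhds 1) := by
  rcases eq_or_lt_of_le hn with h1 | h2
  · -- n = 1
    rw [← h1]
    refine tendsto_const_nhds.congr' ?_
    filter_upwards [eventually_ge_atTop 2] with k hk
    have e1 : (k - 2) * 1 + 2 = k := by omega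
    have e2 : k * 1 = k := by omega
    have e3 : (k - 1) * 1 = k - 1 := by omega
    have e4 : (k - 1) * 1 + 1 = k := by omega
    have hf : (k : ℝ) * ((k - 1).factorial : ℝ) = (k.factorial : ℝ) := by
      exact_mod_cast congrArg (Nat.cast (R := ℝ)) (Nat.mul_factorial_pred (by omega))
    rw [e1, e2, e4, e3, Nat.choose_one_right]
    norm_num
    rw [hf]
    have hk0 : (0:ℝ) < (k.factorial : ℝ) := by exact_mod_cast k.factorial_pos
    have hk1 : (0:ℝ) < (k : ℝ) := by positivity
    field_simp
  · -- n ≥ 2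
    have hn2 : 2 ≤ n := h2
    refine (g_lim n hn).congr' ?_
    filter_upwards [eventually_ge_atTop 2] with k hk
    have hkr : (2:ℝ) ≤ (k:ℝ) := by exact_mod_cast hk
    have hnr : (2:ℝ) ≤ (n:ℝ) := by exact_mod_cast hn2
    have h1k : ((k - 1 : ℕ) : ℝ) = (k : ℝ) - 1 := by
      rw [Nat.cast_sub (by omega : 1 ≤ k)]; norm_num
    have h2k : ((k - 2 : ℕ) : ℝ) = (k : ℝ) - 2 := by
      rw [Nat.cast_sub (by omega : 2 ≤ k)]; norm_num
    have hk1 : (k - 1) * n = (k - 2) * n + 2 + (n - 2) := by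
      have e : k - 1 = k - 2 + 1 := by omega
      have e2 : n = 2 + (n - 2) := by omega
      rw [e, add_mul, one_mul, add_assoc, ← e2]
    have hk2 : k * n = (k - 1) * n + n := by
      have e : k = k - 1 + 1 := by omega
      conv_lhs => rw [e]
      rw [add_mul, one_mul]
    have hsub : k * n - n = (k - 1) * n := by rw [hk2, Nat.add_sub_cancel]
    have hkn : n ≤ k * n := by rw [hk2]; exact Nat.le_add_left _ _
    have hcK : (((k - 1) * n : ℕ) : ℝ) = ((k:ℝ) - 1) * n := by
      push_cast [h1k]; ring
    have hcA : (((k - 2) * n + 2 : ℕ) : ℝ) = ((k:ℝ) - 2) * n + 2 := by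
      push_cast [h2k]; ring
    have F1 : ((((k - 1) * n).factorial : ℕ) : ℝ) =
        ((((k - 2) * n + 2).factorial : ℕ) : ℝ) *
          ∏ j ∈ range (n - 2), (((k:ℝ) - 2) * n + 2 + j + 1) := by
      rw [hk1, fact_cast_add]
      congr 1
      exact Finset.prod_congr rfl fun j _ => by rw [hcA]
    have F2 : (((k * n).factorial : ℕ) : ℝ) =
        ((((k - 1) * n).factorial : ℕ) : ℝ) *
          (((((k:ℝ) - 1) * n) + 1) * ((((k:ℝ) - 1) * n) + 2) *
            ∏ j ∈ range (n - 2), (((k:ℝ) - 1) * n + j + 3)) := by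
      rw [hk2, fact_cast_add]
      congr 1
      have hr : range n = range ((n - 2) + 2) := by congr 1; omega
      rw [hr, peel2, hcK]
      push_cast
      have hpr : ∏ j ∈ range (n - 2), (((k:ℝ) - 1) * ↑n + (↑j + 2) + 1)
          = ∏ j ∈ range (n - 2), (((k:ℝ) - 1) * ↑n + ↑j + 3) :=
        Finset.prod_congr rfl fun j _ => by ring
      rw [hpr]
      ring
    have F3 : (((k * n).choose n : ℕ) : ℝ) =
        (((k * n).factorial : ℕ) : ℝ) /
          ((n.factorial : ℝ) * ((((k - 1) * n).factorial : ℕ) : ℝ)) := by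
      rw [Nat.cast_choose ℝ hkn, hsub]
    have F4 : (n.factorial : ℝ) = (n : ℝ) * ((n - 1).factorial : ℝ) := by
      exact_mod_cast congrArg (Nat.cast (R := ℝ)) (Nat.mul_factorial_pred (by omega)).symm
    have F5 : (((k - 1) * n + 1 : ℕ) : ℝ) = ((k:ℝ) - 1) * n + 1 := by
      push_cast [hcK]; ring
    have F6 : (∏ j ∈ range (n - 2), ((((k:ℝ) - 2) * n + 3 + j) / (((k:ℝ) - 1) * n + 3 + j)))
        = (∏ j ∈ range (n - 2), (((k:ℝ) - 2) * n + 2 + j + 1)) /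
          (∏ j ∈ range (n - 2), (((k:ℝ) - 1) * n + j + 3)) := by
      rw [Finset.prod_div_distrib]
      congr 1
      · exact Finset.prod_congr rfl fun j _ => by ring
      · exact Finset.prod_congr rfl fun j _ => by ring
    -- positivity facts
    have hP2pos : (0:ℝ) < ∏ j ∈ range (n - 2), (((k:ℝ) - 2) * n + 2 + j + 1) := by
      apply Finset.prod_pos
      intro j _
      have hj : (0:ℝ) ≤ (j:ℝ) := by positivity
      nlinarith
    have hP3pos : (0:ℝ) < ∏ j ∈ range (n - 2), (((k:ℝ) - 1) * n + j + 3) := by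
      apply Finset.prod_pos
      intro j _
      have hj : (0:ℝ) ≤ (j:ℝ) := by positivity
      nlinarith
    have hKpos : (0:ℝ) < ((k:ℝ) - 1) * n := by nlinarith
    have hFa : (0:ℝ) < ((((k - 2) * n + 2).factorial : ℕ) : ℝ) := by
      exact_mod_cast Nat.factorial_pos _
    have hFb : (0:ℝ) < (((n - 1).factorial : ℕ) : ℝ) := by
      exact_mod_cast Nat.factorial_pos _
    have hFc : (0:ℝ) < ((((k - 1) * n).factorial : ℕ) : ℝ) := by
      exact_mod_cast Nat.factorial_pos _
    have hnpos : (0:ℝ) < (n:ℝ) := by linarith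
    have hkpos : (0:ℝ) < (k:ℝ) := by linarith
    rw [F6, F3, F2, F1, F4, F5]
    field_simp [hP2pos.ne', hP3pos.ne', hKpos.ne', hFa.ne', hFb.ne', hFc.ne', hnpos.ne',
      hkpos.ne', (by linarith : (0:ℝ) < ((k:ℝ) - 1) * n + 1).ne',
      (by linarith : (0:ℝ) < ((k:ℝ) - 1) * n + 2).ne']
    rw [mul_div_mul_right _ _ (by nlinarith : (0:ℝ) < (n:ℝ) * ((k:ℝ) - 1) + 1).ne']
end
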